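/- arXiv:1610.05350 — 7 statements merged into one kernel-verified Lean document; each statement's English description precedes it below -/
import Mathlib

section
/- Define Ψ(x,y) = (x·√(1+y) + y·√(1+x)) / (x + y + x·y) for nonnegative reals x, y not both zero, and Ψ(0,0) = 1. Then 0 ≤ Ψ(x,y) ≤ 1 for all x, y ≥ 0. -/
open Real

/-- Ψ(x,y) = (x√(1+y) + y√(1+x))/(x+y+xy) if (x,y) ≠ (0,0), and Ψ(0,0) = 1. -/
noncomputable def Psi (x y : ℝ) : ℝ :=
  if x = 0 ∧ y = 0 then 1
  else (x * Real.sqrt (1 + y) + y * Real.sqrt (1 + x)) / (x + y + x * y)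

theorem psi_mem_Icc (x y : ℝ) (hx : 0 ≤ x) (hy : 0 ≤ y) :
    0 ≤ Psi x y ∧ Psi x y ≤ 1 := by
  unfold Psi
  split_ifs with h
  · norm_num
  · have hpos : 0 < x + y + x * y := by
      rcases lt_or_eq_of_le hx with hx' | hx'
      · positivity
      · rcases lt_or_eq_of_le hy with hy' | hy'
        · positivity
        · exact absurd ⟨hx'.symm, hy'.symm⟩ h
    have h1 : Real.sqrt (1 + y) ≤ 1 + y / 2 := by
      rw [show (1 : ℝ) + y / 2 = Real.sqrt ((1 + y / 2) ^ 2) by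
        rw [Real.sqrt_sq (by linarith)]]
      apply Real.sqrt_le_sqrt; nlinarith
    have h2 : Real.sqrt (1 + x) ≤ 1 + x / 2 := by
      rw [show (1 : ℝ) + x / 2 = Real.sqrt ((1 + x / 2) ^ 2) by
        rw [Real.sqrt_sq (by linarith)]]
      apply Real.sqrt_le_sqrt; nlinarith
    constructor
    · apply div_nonneg _ hpos.le
      have := Real.sqrt_nonneg (1 + y)
      have := Real.sqrt_nonneg (1 + x)
      positivity
    · rw [div_le_one hpos]
      nlinarith [mul_le_mul_of_nonneg_left h1 hx, mul_le_mul_of_nonneg_left h2 hy]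
end

section
/- For fixed y > 0, the function x ↦ Ψ(x,y) = (x√(1+y) + y√(1+x))/(x+y+xy) is non-increasing on (0,∞); precisely, its partial derivative with respect to x equals −y(1−√K)²/(2(x+y+xy)²√(1+x)) where K = (1+x)(1+y), which is ≤ 0. -/
open Real Set

lemma psi_hasDeriv (y : ℝ) (hy : 0 < y) (x : ℝ) (hx : 0 < x) :
    HasDerivAt (fun x : ℝ =>
        (x * Real.sqrt (1 + y) + y * Real.sqrt (1 + x)) / (x + y + x * y))
      (-(y * (1 - Real.sqrt ((1 + x) * (1 + y))) ^ 2 /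
          (2 * (x + y + x * y) ^ 2 * Real.sqrt (1 + x)))) x := by
  have hx1 : (0:ℝ) < 1 + x := by linarith
  have hy1 : (0:ℝ) < 1 + y := by linarith
  have hg : 0 < x + y + x * y := by positivity
  have h1 : HasDerivAt (fun x : ℝ => x * Real.sqrt (1 + y)) (Real.sqrt (1 + y)) x := by
    simpa using (hasDerivAt_id x).mul_const (Real.sqrt (1 + y))
  have hlin : HasDerivAt (fun x : ℝ => 1 + x) 1 x := by
    simpa using (hasDerivAt_const x (1:ℝ)).fun_add (hasDerivAt_id x)
  have h2 : HasDerivAt (fun x : ℝ => Real.sqrt (1 + x)) (1 / (2 * Real.sqrt (1 + x))) x :=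
    hlin.sqrt hx1.ne'
  have hf : HasDerivAt (fun x : ℝ => x * Real.sqrt (1 + y) + y * Real.sqrt (1 + x))
      (Real.sqrt (1 + y) + y * (1 / (2 * Real.sqrt (1 + x)))) x :=
    h1.add (h2.const_mul y)
  have hg' : HasDerivAt (fun x : ℝ => x + y + x * y) (1 + y) x := by
    have := (((hasDerivAt_id x).add_const y).fun_add ((hasDerivAt_id x).mul_const y))
    simpa using this
  have hd := hf.fun_div hg' hg.ne'
  refine hd.congr_deriv ?_
  have ha : 0 < Real.sqrt (1 + x) := Real.sqrt_pos.2 hx1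
  have hb : 0 < Real.sqrt (1 + y) := Real.sqrt_pos.2 hy1
  rw [Real.sqrt_mul hx1.le]
  set a := Real.sqrt (1 + x) with hA
  set b := Real.sqrt (1 + y) with hB
  have ha2 : a ^ 2 = 1 + x := Real.sq_sqrt hx1.le
  have hb2 : b ^ 2 = 1 + y := Real.sq_sqrt hy1.le
  have hxe : x = a ^ 2 - 1 := by linarith
  have hye : y = b ^ 2 - 1 := by linarith
  rw [hxe, hye]
  have hg2 : (a^2 - 1) + (b^2 - 1) + (a^2 - 1) * (b^2 - 1) ≠ 0 := by
    rw [← hxe, ← hye]; exact hg.ne'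
  field_simp
  ring

/-- For fixed `y > 0`, the map `x ↦ Ψ(x,y) = (x√(1+y) + y√(1+x))/(x+y+xy)` has, at each
`x > 0`, derivative `−y(1−√K)²/(2(x+y+xy)²√(1+x))` where `K = (1+x)(1+y)`; this derivative
is nonpositive, and the map is non-increasing (antitone) on `(0,∞)`. -/
theorem psi_deriv_and_antitone (y : ℝ) (hy : 0 < y) :
    (∀ x : ℝ, 0 < x →
      HasDerivAt (fun x : ℝ =>
          (x * Real.sqrt (1 + y) + y * Real.sqrt (1 + x)) / (x + y + x * y))
        (-(y * (1 - Real.sqrt ((1 + x) * (1 + y))) ^ 2 /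
            (2 * (x + y + x * y) ^ 2 * Real.sqrt (1 + x)))) x) ∧
    (∀ x : ℝ, 0 < x →
      -(y * (1 - Real.sqrt ((1 + x) * (1 + y))) ^ 2 /
          (2 * (x + y + x * y) ^ 2 * Real.sqrt (1 + x))) ≤ 0) ∧
    AntitoneOn (fun x : ℝ =>
        (x * Real.sqrt (1 + y) + y * Real.sqrt (1 + x)) / (x + y + x * y))
      (Set.Ioi (0 : ℝ)) := by
  refine ⟨fun x hx => psi_hasDeriv y hy x hx, fun x hx => ?_, ?_⟩
  · have hx1 : (0:ℝ) < 1 + x := by linarith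
    have hg : 0 < x + y + x * y := by positivity
    have ha : 0 < Real.sqrt (1 + x) := Real.sqrt_pos.2 hx1
    have : 0 ≤ y * (1 - Real.sqrt ((1 + x) * (1 + y))) ^ 2 /
        (2 * (x + y + x * y) ^ 2 * Real.sqrt (1 + x)) := by positivity
    linarith
  · apply antitoneOn_of_deriv_nonpos (convex_Ioi 0)
    · intro x hx
      exact ((psi_hasDeriv y hy x hx).differentiableAt).continuousAt.continuousWithinAt
    · intro x hx
      rw [interior_Ioi] at hx
      exact ((psi_hasDeriv y hy x hx).differentiableAt).differentiableWithinAt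
    · intro x hx
      rw [interior_Ioi] at hx
      rw [(psi_hasDeriv y hy x hx).deriv]
      have hx0 : 0 < x := Set.mem_Ioi.mp hx
      have hx1 : (0:ℝ) < 1 + x := by linarith
      have hg : 0 < x + y + x * y := by positivity
      have : 0 ≤ y * (1 - Real.sqrt ((1 + x) * (1 + y))) ^ 2 /
          (2 * (x + y + x * y) ^ 2 * Real.sqrt (1 + x)) := by positivity
      linarith
end

section
/- Let X, X' be i.i.d. nonnegative random variables and d > 1. Define s(X,X') = √d·(X+X') / (√(X + X'/d)·√(X' + X/d)) when X > 0 or X' > 0, and s(X,X') = d when X = X' = 0. Then E[s(X,X')] ≥ 2d^{3/2}/(d+1) = 2√d·(1 − 1/(d+1)). -/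
open MeasureTheory ProbabilityTheory Real

/-- `s(x,x') = √d (x+x') / (√(x + x'/d) √(x' + x/d))` when `x > 0` or `x' > 0`,
and `s(0,0) = d`. -/
noncomputable def sFun (d x x' : ℝ) : ℝ :=
  if x = 0 ∧ x' = 0 then d
  else Real.sqrt d * (x + x') / (Real.sqrt (x + x' / d) * Real.sqrt (x' + x / d))

lemma sFun_bounds (d x x' : ℝ) (hd : 1 < d) (hx : 0 ≤ x) (hx' : 0 ≤ x') :
    2 * d * Real.sqrt d / (d + 1) ≤ sFun d x x' ∧ sFun d x x' ≤ d := by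
  have hd0 : (0:ℝ) < d := by linarith
  have hsd : Real.sqrt d ^ 2 = d := Real.sq_sqrt hd0.le
  have hsd0 : 0 < Real.sqrt d := Real.sqrt_pos.2 hd0
  rw [sFun]
  by_cases h : x = 0 ∧ x' = 0
  · rw [if_pos h]
    constructor
    · rw [div_le_iff₀ (by linarith)]
      nlinarith [sq_nonneg (Real.sqrt d - 1)]
    · exact le_refl d
  · rw [if_neg h]
    have hxx : 0 < x + x' := by
      rcases (not_and_or.1 h) with h1 | h1
      · have : 0 < x := lt_of_le_of_ne hx (Ne.symm h1); linarith
      · have : 0 < x' := lt_of_le_of_ne hx' (Ne.symm h1); linarith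
    have ha : 0 < x + x' / d := by
      rcases (not_and_or.1 h) with h1 | h1
      · have hp : 0 < x := lt_of_le_of_ne hx (Ne.symm h1)
        have := div_nonneg hx' hd0.le; linarith
      · have hp : 0 < x' := lt_of_le_of_ne hx' (Ne.symm h1)
        have := div_pos hp hd0; linarith
    have hb : 0 < x' + x / d := by
      rcases (not_and_or.1 h) with h1 | h1
      · have hp : 0 < x := lt_of_le_of_ne hx (Ne.symm h1)
        have := div_pos hp hd0; linarith
      · have hp : 0 < x' := lt_of_le_of_ne hx' (Ne.symm h1)
        have := div_nonneg hx hd0.le; linarith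
    set sa := Real.sqrt (x + x' / d) with hsa_def
    set sb := Real.sqrt (x' + x / d) with hsb_def
    have hsa0 : 0 < sa := Real.sqrt_pos.2 ha
    have hsb0 : 0 < sb := Real.sqrt_pos.2 hb
    have hsa2 : sa ^ 2 = x + x' / d := Real.sq_sqrt ha.le
    have hsb2 : sb ^ 2 = x' + x / d := Real.sq_sqrt hb.le
    -- linear identity: (d+1)(x+x') = d (a+b)
    have hlin : (d + 1) * (x + x') = d * (sa ^ 2 + sb ^ 2) := by
      rw [hsa2, hsb2]; field_simp; ring
    constructor
    · rw [div_le_div_iff₀ (by linarith) (by positivity)]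
      -- goal: 2*d*√d * (sa*sb) ≤ √d*(x+x') * (d+1)
      nlinarith [mul_nonneg (mul_nonneg hd0.le hsd0.le) (sq_nonneg (sa - sb))]
    · rw [div_le_iff₀ (by positivity)]
      -- goal: √d*(x+x') ≤ d * (sa*sb)
      -- use (√d sa - sb)(√d sb - sa) ≥ 0
      have h1 : sb ≤ Real.sqrt d * sa := by
        rw [← Real.sqrt_mul hd0.le]
        apply Real.sqrt_le_sqrt
        rw [mul_add]
        have : x / d ≤ d * x := by
          rw [div_le_iff₀ hd0]
          nlinarith [mul_nonneg (mul_nonneg hx (by linarith : (0:ℝ) ≤ d - 1)) (by linarith : (0:ℝ) ≤ d + 1)]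
        have h2 : x' ≤ d * (x' / d) := by
          rw [mul_div_cancel₀ x' hd0.ne']
        linarith
      have h2 : sa ≤ Real.sqrt d * sb := by
        rw [← Real.sqrt_mul hd0.le]
        apply Real.sqrt_le_sqrt
        rw [mul_add]
        have : x' / d ≤ d * x' := by
          rw [div_le_iff₀ hd0]
          nlinarith [mul_nonneg (mul_nonneg hx' (by linarith : (0:ℝ) ≤ d - 1)) (by linarith : (0:ℝ) ≤ d + 1)]
        have h2 : x ≤ d * (x / d) := by
          rw [mul_div_cancel₀ x hd0.ne']
        linarith
      have hprod : 0 ≤ (Real.sqrt d * sa - sb) * (Real.sqrt d * sb - sa) :=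
        mul_nonneg (by linarith) (by linarith)
      have expand : (Real.sqrt d * sa - sb) * (Real.sqrt d * sb - sa)
          = (d + 1) * (sa * sb) - Real.sqrt d * (sa ^ 2 + sb ^ 2) := by
        linear_combination (sa * sb) * hsd
      have key : Real.sqrt d * (sa ^ 2 + sb ^ 2) ≤ (d + 1) * (sa * sb) := by
        linarith [hprod, expand.symm ▸ hprod]
      have hmain : (d + 1) * (Real.sqrt d * (x + x')) ≤ (d + 1) * (d * (sa * sb)) := by
        calc (d + 1) * (Real.sqrt d * (x + x'))
            = Real.sqrt d * ((d + 1) * (x + x')) := by ring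
          _ = d * (Real.sqrt d * (sa ^ 2 + sb ^ 2)) := by rw [hlin]; ring
          _ ≤ d * ((d + 1) * (sa * sb)) := mul_le_mul_of_nonneg_left key hd0.le
          _ = (d + 1) * (d * (sa * sb)) := by ring
      exact le_of_mul_le_mul_left hmain (by linarith)

/-- For i.i.d. nonnegative random variables `X, X'` and `d > 1`,
`E[s(X,X')] ≥ 2 d^{3/2}/(d+1) = 2√d (1 − 1/(d+1))`. -/
theorem expectation_sFun_ge {Ω : Type*} [MeasurableSpace Ω]
    (μ : Measure Ω) [IsProbabilityMeasure μ] (d : ℝ) (hd : 1 < d)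
    (X X' : Ω → ℝ) (hX : Measurable X) (hX' : Measurable X')
    (hXnn : ∀ ω, 0 ≤ X ω) (hX'nn : ∀ ω, 0 ≤ X' ω)
    (hid : IdentDistrib X X' μ μ) (hindep : IndepFun X X' μ) :
    2 * d * Real.sqrt d / (d + 1) ≤ ∫ ω, sFun d (X ω) (X' ω) ∂μ := by
  have hd0 : (0:ℝ) < d := by linarith
  have hlow : ∀ ω, 2 * d * Real.sqrt d / (d + 1) ≤ sFun d (X ω) (X' ω) :=
    fun ω => (sFun_bounds d _ _ hd (hXnn ω) (hX'nn ω)).1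
  have hhigh : ∀ ω, sFun d (X ω) (X' ω) ≤ d :=
    fun ω => (sFun_bounds d _ _ hd (hXnn ω) (hX'nn ω)).2
  have hc0 : 0 ≤ 2 * d * Real.sqrt d / (d + 1) := by positivity
  have hmeas : Measurable fun ω => sFun d (X ω) (X' ω) := by
    unfold sFun
    apply Measurable.ite
    · exact (measurableSet_eq_fun hX measurable_const).inter
        (measurableSet_eq_fun hX' measurable_const)
    · exact measurable_const
    · apply Measurable.div
      · exact measurable_const.mul (hX.add hX')
      · exact ((hX.add (hX'.div_const d)).sqrt).mul ((hX'.add (hX.div_const d)).sqrt)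
  have hint : Integrable (fun ω => sFun d (X ω) (X' ω)) μ := by
    apply Integrable.mono' (integrable_const d) hmeas.aestronglyMeasurable
    filter_upwards with ω
    rw [Real.norm_eq_abs, abs_le]
    exact ⟨by linarith [hlow ω], hhigh ω⟩
  calc 2 * d * Real.sqrt d / (d + 1)
      = ∫ _ω, (2 * d * Real.sqrt d / (d + 1)) ∂μ := by simp
    _ ≤ ∫ ω, sFun d (X ω) (X' ω) ∂μ :=
        integral_mono (integrable_const _) hint hlow
end

section
/- In the setting of the two-type Galton-Watson tree with parameters a,b (d = (a+b)/2, μ = (a−b)/2, μ² > d), the joint moment generating function M_ℓ(t,s) = E[exp(t·X_ℓ + s·Y_ℓ)] is finite for all real t,s and satisfies the recursion M_ℓ(t,s) = M_{ℓ−1}( d^ℓ·(exp(t/d^ℓ)·cosh(s/μ^ℓ) − 1), μ^ℓ·exp(t/d^ℓ)·sinh(s/μ^ℓ) ) for all ℓ ≥ 1. -/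
set_option maxHeartbeats 1000000

open MeasureTheory ProbabilityTheory Filter Real
open scoped ENNReal NNReal Nat

lemma aux_poisson_hasSum (r : ℝ≥0) (c : ℝ) :
    HasSum (fun j : ℕ => Real.exp (c * j) * poissonPMFReal r j)
      (Real.exp ((r : ℝ) * (Real.exp c - 1))) := by
  have h : HasSum (fun j : ℕ => ((r : ℝ) * Real.exp c) ^ j / j !)
      (Real.exp ((r : ℝ) * Real.exp c)) := by
    rw [Real.exp_eq_exp_ℝ]
    exact NormedSpace.expSeries_div_hasSum_exp _
  have h2 := h.mul_left (Real.exp (-(r : ℝ)))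
  have hfun : (fun j : ℕ => Real.exp (-(r : ℝ)) * (((r : ℝ) * Real.exp c) ^ j / j !))
      = fun j : ℕ => Real.exp (c * j) * poissonPMFReal r j := by
    funext j
    unfold ProbabilityTheory.poissonPMFReal
    rw [mul_pow, ← Real.exp_nat_mul, mul_comm (j : ℝ) c]
    ring
  rw [hfun] at h2
  have hv : Real.exp (-(r : ℝ)) * Real.exp ((r : ℝ) * Real.exp c)
      = Real.exp ((r : ℝ) * (Real.exp c - 1)) := by
    rw [← Real.exp_add]; congr 1; ring
  rwa [hv] at h2

lemma aux_poisson_tsum (r : ℝ≥0) (c : ℝ) :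
    ∑' j : ℕ, ENNReal.ofReal (Real.exp (c * j) * poissonPMFReal r j)
      = ENNReal.ofReal (Real.exp ((r : ℝ) * (Real.exp c - 1))) := by
  rw [← ENNReal.ofReal_tsum_of_nonneg
      (fun j => mul_nonneg (Real.exp_nonneg _) poissonPMFReal_nonneg)
      (aux_poisson_hasSum r c).summable,
    (aux_poisson_hasSum r c).tsum_eq]

lemma aux_poisson_tsum2 (r₁ r₂ : ℝ≥0) (α β : ℝ) :
    ∑' p : ℕ × ℕ, ENNReal.ofReal (Real.exp (α * p.1 + β * p.2) *
        (poissonPMFReal r₁ p.1 * poissonPMFReal r₂ p.2))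
      = ENNReal.ofReal
          (Real.exp ((r₁ : ℝ) * (Real.exp α - 1) + (r₂ : ℝ) * (Real.exp β - 1))) := by
  have hsplit : ∀ p : ℕ × ℕ, ENNReal.ofReal (Real.exp (α * p.1 + β * p.2) *
      (poissonPMFReal r₁ p.1 * poissonPMFReal r₂ p.2))
      = ENNReal.ofReal (Real.exp (α * p.1) * poissonPMFReal r₁ p.1) *
        ENNReal.ofReal (Real.exp (β * p.2) * poissonPMFReal r₂ p.2) := by
    intro p
    rw [← ENNReal.ofReal_mul (mul_nonneg (Real.exp_nonneg _) poissonPMFReal_nonneg)]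
    congr 1
    rw [Real.exp_add]; ring
  rw [ENNReal.tsum_prod']
  have h1 : ∀ j : ℕ, (∑' k : ℕ, ENNReal.ofReal (Real.exp (α * j + β * k) *
      (poissonPMFReal r₁ j * poissonPMFReal r₂ k)))
      = ENNReal.ofReal (Real.exp (α * j) * poissonPMFReal r₁ j) *
        ENNReal.ofReal (Real.exp ((r₂ : ℝ) * (Real.exp β - 1))) := by
    intro j
    rw [← aux_poisson_tsum r₂ β, ← ENNReal.tsum_mul_left]
    exact tsum_congr fun k => hsplit (j, k)
  rw [tsum_congr h1, ENNReal.tsum_mul_right, aux_poisson_tsum r₁ α,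
    ← ENNReal.ofReal_mul (Real.exp_nonneg _), ← Real.exp_add]

lemma aux_algebra (dd mu Dl Ml E P p m : ℝ) (hD : Dl ≠ 0) (hM : Ml ≠ 0) (hP : P ≠ 0) :
    ((dd + mu) / 2 * p + (dd - mu) / 2 * m) * (E * P - 1)
      + ((dd - mu) / 2 * p + (dd + mu) / 2 * m) * (E / P - 1)
      = Dl * dd * (E * ((P + P⁻¹) / 2) - 1) * ((p + m) / Dl)
        + Ml * mu * E * ((P - P⁻¹) / 2) * ((p - m) / Ml) := by
  field_simp
  ring

/-- In the two-type Galton-Watson tree with parameters `a, b` (`d = (a+b)/2`,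
`μ = (a−b)/2`, `μ² > d`), with `X ℓ = d^{−ℓ}(N⁺ ℓ + N⁻ ℓ)` and
`Y ℓ = μ^{−ℓ}(N⁺ ℓ − N⁻ ℓ)`, the joint moment generating function
`M ℓ (t,s) = E[exp(t X ℓ + s Y ℓ)]` is finite for all real `t, s` and satisfies
`M ℓ (t,s) = M (ℓ−1) (d^ℓ(e^{t/d^ℓ} cosh(s/μ^ℓ) − 1), μ^ℓ e^{t/d^ℓ} sinh(s/μ^ℓ))`
for all `ℓ ≥ 1`. -/
theorem two_type_galton_watson_mgf_recursion
    {Ω : Type*} {m0 : MeasurableSpace Ω} (μPr : Measure Ω) [IsProbabilityMeasure μPr]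
    (ℱ : Filtration ℕ m0) (a b : ℝ) (hb : 0 ≤ b) (hab : b < a)
    (Np Nm : ℕ → Ω → ℕ)
    (hadaptp : ∀ ℓ, @Measurable Ω ℕ (ℱ ℓ) _ (Np ℓ))
    (hadaptm : ∀ ℓ, @Measurable Ω ℕ (ℱ ℓ) _ (Nm ℓ))
    (hNp0 : ∀ ω, Np 0 ω = 1) (hNm0 : ∀ ω, Nm 0 ω = 0)
    (hcond : ∀ ℓ j k,
      μPr[(fun ω => if Np (ℓ + 1) ω = j ∧ Nm (ℓ + 1) ω = k then (1 : ℝ) else 0) | ℱ ℓ]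
        =ᵐ[μPr] fun ω =>
          poissonPMFReal (a / 2 * (Np ℓ ω : ℝ) + b / 2 * (Nm ℓ ω : ℝ)).toNNReal j *
          poissonPMFReal (b / 2 * (Np ℓ ω : ℝ) + a / 2 * (Nm ℓ ω : ℝ)).toNNReal k)
    (hd : 1 < (a + b) / 2) (hμ : (a + b) / 2 < ((a - b) / 2) ^ 2) :
    let d : ℝ := (a + b) / 2
    let μ : ℝ := (a - b) / 2
    let X : ℕ → Ω → ℝ := fun ℓ ω => ((Np ℓ ω : ℝ) + (Nm ℓ ω : ℝ)) / d ^ ℓ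
    let Y : ℕ → Ω → ℝ := fun ℓ ω => ((Np ℓ ω : ℝ) - (Nm ℓ ω : ℝ)) / μ ^ ℓ
    let M : ℕ → ℝ → ℝ → ℝ := fun ℓ t s => ∫ ω, Real.exp (t * X ℓ ω + s * Y ℓ ω) ∂μPr
    (∀ ℓ t s, Integrable (fun ω => Real.exp (t * X ℓ ω + s * Y ℓ ω)) μPr) ∧
    (∀ ℓ : ℕ, ∀ t s : ℝ,
      M (ℓ + 1) t s =
        M ℓ (d ^ (ℓ + 1) * (Real.exp (t / d ^ (ℓ + 1)) * Real.cosh (s / μ ^ (ℓ + 1)) - 1))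
          (μ ^ (ℓ + 1) * Real.exp (t / d ^ (ℓ + 1)) * Real.sinh (s / μ ^ (ℓ + 1)))) := by
  intro d μ X Y M
  have hdv : d = (a + b) / 2 := rfl
  have hμv : μ = (a - b) / 2 := rfl
  have hXv : ∀ ℓ ω, X ℓ ω = ((Np ℓ ω : ℝ) + (Nm ℓ ω : ℝ)) / d ^ ℓ := fun _ _ => rfl
  have hYv : ∀ ℓ ω, Y ℓ ω = ((Np ℓ ω : ℝ) - (Nm ℓ ω : ℝ)) / μ ^ ℓ := fun _ _ => rfl
  have hd0 : (0 : ℝ) < d := lt_trans zero_lt_one hd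
  have hμ0 : (0 : ℝ) < μ := by rw [hμv]; linarith
  have hdl : ∀ ℓ : ℕ, (d : ℝ) ^ ℓ ≠ 0 := fun ℓ => (pow_pos hd0 ℓ).ne'
  have hμl : ∀ ℓ : ℕ, (μ : ℝ) ^ ℓ ≠ 0 := fun ℓ => (pow_pos hμ0 ℓ).ne'
  have hA : a / 2 = (d + μ) / 2 := by rw [hdv, hμv]; ring
  have hB : b / 2 = (d - μ) / 2 := by rw [hdv, hμv]; ring
  -- measurability
  have hmp : ∀ ℓ, Measurable (Np ℓ) := fun ℓ => (hadaptp ℓ).mono (ℱ.le ℓ) le_rfl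
  have hmm : ∀ ℓ, Measurable (Nm ℓ) := fun ℓ => (hadaptm ℓ).mono (ℱ.le ℓ) le_rfl
  have hcastp : ∀ ℓ, Measurable fun ω => (Np ℓ ω : ℝ) := fun ℓ =>
    measurable_from_top.comp (hmp ℓ)
  have hcastm : ∀ ℓ, Measurable fun ω => (Nm ℓ ω : ℝ) := fun ℓ =>
    measurable_from_top.comp (hmm ℓ)
  have hmF : ∀ ℓ (t s : ℝ), Measurable fun ω => Real.exp (t * X ℓ ω + s * Y ℓ ω) := by
    intro ℓ t s
    exact (((((hcastp ℓ).add (hcastm ℓ)).div_const _).const_mul t).add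
      ((((hcastp ℓ).sub (hcastm ℓ)).div_const _).const_mul s)).exp
  have hmeas_pp : ∀ (x : Ω → ℝ), Measurable x → ∀ j : ℕ,
      Measurable fun ω => poissonPMFReal (x ω).toNNReal j := by
    intro x hx j
    unfold ProbabilityTheory.poissonPMFReal
    simp only [Real.coe_toNNReal']
    exact (((hx.max measurable_const).neg.exp).mul
      ((hx.max measurable_const).pow_const j)).div_const _
  -- nonnegativity of the Poisson rates
  have hΛpnn : ∀ ℓ (ω : Ω), 0 ≤ a / 2 * (Np ℓ ω : ℝ) + b / 2 * (Nm ℓ ω : ℝ) := fun ℓ ω =>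
    add_nonneg (mul_nonneg (by linarith) (Nat.cast_nonneg _))
      (mul_nonneg (by linarith) (Nat.cast_nonneg _))
  have hΛmnn : ∀ ℓ (ω : Ω), 0 ≤ b / 2 * (Np ℓ ω : ℝ) + a / 2 * (Nm ℓ ω : ℝ) := fun ℓ ω =>
    add_nonneg (mul_nonneg (by linarith) (Nat.cast_nonneg _))
      (mul_nonneg (by linarith) (Nat.cast_nonneg _))
  -- THE KEY LEMMA
  have key : ∀ (ℓ : ℕ) (t s : ℝ),
      ∫⁻ ω, ENNReal.ofReal (Real.exp (t * X (ℓ + 1) ω + s * Y (ℓ + 1) ω)) ∂μPr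
        = ∫⁻ ω, ENNReal.ofReal (Real.exp
            ((d ^ (ℓ + 1) * (Real.exp (t / d ^ (ℓ + 1)) * Real.cosh (s / μ ^ (ℓ + 1)) - 1))
              * X ℓ ω
            + (μ ^ (ℓ + 1) * Real.exp (t / d ^ (ℓ + 1)) * Real.sinh (s / μ ^ (ℓ + 1)))
              * Y ℓ ω)) ∂μPr := by
    intro ℓ t s
    set t' : ℝ := t / d ^ (ℓ + 1) with ht'
    set s' : ℝ := s / μ ^ (ℓ + 1) with hs'
    set α : ℝ := t' + s' with hα
    set β : ℝ := t' - s' with hβ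
    set Λp : Ω → ℝ := fun ω => a / 2 * (Np ℓ ω : ℝ) + b / 2 * (Nm ℓ ω : ℝ) with hΛp
    set Λm : Ω → ℝ := fun ω => b / 2 * (Np ℓ ω : ℝ) + a / 2 * (Nm ℓ ω : ℝ) with hΛm
    have hΛpm : Measurable Λp := ((hcastp ℓ).const_mul _).add ((hcastm ℓ).const_mul _)
    have hΛmm : Measurable Λm := ((hcastp ℓ).const_mul _).add ((hcastm ℓ).const_mul _)
    have hS : ∀ p : ℕ × ℕ, MeasurableSet {ω | Np (ℓ + 1) ω = p.1 ∧ Nm (ℓ + 1) ω = p.2} :=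
      fun p => ((hmp (ℓ + 1)) (measurableSet_singleton p.1)).inter
        ((hmm (ℓ + 1)) (measurableSet_singleton p.2))
    have hstep1 : ∀ ω, t * X (ℓ + 1) ω + s * Y (ℓ + 1) ω
        = α * (Np (ℓ + 1) ω : ℝ) + β * (Nm (ℓ + 1) ω : ℝ) := by
      intro ω
      rw [hXv, hYv, hα, hβ, ht', hs']
      field_simp
      ring
    have hper : ∀ ω : Ω, ENNReal.ofReal (Real.exp (t * X (ℓ + 1) ω + s * Y (ℓ + 1) ω))
        = ∑' p : ℕ × ℕ, Set.indicator {ω' | Np (ℓ + 1) ω' = p.1 ∧ Nm (ℓ + 1) ω' = p.2}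
            (fun _ => ENNReal.ofReal (Real.exp (α * p.1 + β * p.2))) ω := by
      intro ω
      rw [tsum_eq_single (Np (ℓ + 1) ω, Nm (ℓ + 1) ω)]
      · rw [hstep1 ω, Set.indicator_of_mem]
        exact ⟨rfl, rfl⟩
      · intro p hp
        rw [Set.indicator_of_notMem]
        intro hmem
        exact hp (Prod.ext hmem.1.symm hmem.2.symm)
    have hLHS : ∫⁻ ω, ENNReal.ofReal (Real.exp (t * X (ℓ + 1) ω + s * Y (ℓ + 1) ω)) ∂μPr
        = ∑' p : ℕ × ℕ, ENNReal.ofReal (Real.exp (α * p.1 + β * p.2)) *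
            μPr {ω | Np (ℓ + 1) ω = p.1 ∧ Nm (ℓ + 1) ω = p.2} := by
      rw [lintegral_congr hper,
        lintegral_tsum fun p => (measurable_const.indicator (hS p)).aemeasurable]
      exact tsum_congr fun p => lintegral_indicator_const (hS p) _
    have hmeasure_eq : ∀ p : ℕ × ℕ, μPr {ω | Np (ℓ + 1) ω = p.1 ∧ Nm (ℓ + 1) ω = p.2}
        = ∫⁻ ω, ENNReal.ofReal
            (poissonPMFReal (Λp ω).toNNReal p.1 * poissonPMFReal (Λm ω).toNNReal p.2) ∂μPr := by
      intro p
      have hiff : (fun ω => if Np (ℓ + 1) ω = p.1 ∧ Nm (ℓ + 1) ω = p.2 then (1 : ℝ) else 0)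
          = Set.indicator {ω | Np (ℓ + 1) ω = p.1 ∧ Nm (ℓ + 1) ω = p.2} (fun _ => (1 : ℝ)) := by
        funext ω
        simp only [Set.indicator_apply, Set.mem_setOf_eq]
      have hppint : Integrable
          (fun ω => poissonPMFReal (Λp ω).toNNReal p.1 * poissonPMFReal (Λm ω).toNNReal p.2)
          μPr := integrable_condExp.congr (hcond ℓ p.1 p.2)
      calc μPr {ω | Np (ℓ + 1) ω = p.1 ∧ Nm (ℓ + 1) ω = p.2}
          = ENNReal.ofReal ((μPr {ω | Np (ℓ + 1) ω = p.1 ∧ Nm (ℓ + 1) ω = p.2}).toReal) :=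
            (ENNReal.ofReal_toReal (measure_ne_top _ _)).symm
        _ = ENNReal.ofReal (∫ ω, (if Np (ℓ + 1) ω = p.1 ∧ Nm (ℓ + 1) ω = p.2 then (1 : ℝ)
              else 0) ∂μPr) := by
            rw [show (∫ ω, (if Np (ℓ + 1) ω = p.1 ∧ Nm (ℓ + 1) ω = p.2 then (1 : ℝ) else 0) ∂μPr)
                = ∫ ω, Set.indicator {ω | Np (ℓ + 1) ω = p.1 ∧ Nm (ℓ + 1) ω = p.2}
                    (fun _ => (1 : ℝ)) ω ∂μPr from
                integral_congr_ae (ae_of_all _ fun ω => congrFun hiff ω),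
              integral_indicator_const (1 : ℝ) (hS p), smul_eq_mul, mul_one, measureReal_def]
        _ = ENNReal.ofReal (∫ ω, (μPr[(fun ω => if Np (ℓ + 1) ω = p.1 ∧ Nm (ℓ + 1) ω = p.2
              then (1 : ℝ) else 0) | ℱ ℓ]) ω ∂μPr) := by
            rw [integral_condExp (ℱ.le ℓ)]
        _ = ENNReal.ofReal (∫ ω, poissonPMFReal (Λp ω).toNNReal p.1 *
              poissonPMFReal (Λm ω).toNNReal p.2 ∂μPr) := by
            rw [integral_congr_ae (hcond ℓ p.1 p.2)]
        _ = ∫⁻ ω, ENNReal.ofReal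
              (poissonPMFReal (Λp ω).toNNReal p.1 * poissonPMFReal (Λm ω).toNNReal p.2) ∂μPr :=
            ofReal_integral_eq_lintegral_ofReal hppint (ae_of_all _ fun ω =>
              mul_nonneg poissonPMFReal_nonneg poissonPMFReal_nonneg)
    have hconst_mul : ∀ p : ℕ × ℕ,
        ENNReal.ofReal (Real.exp (α * p.1 + β * p.2)) *
          ∫⁻ ω, ENNReal.ofReal
            (poissonPMFReal (Λp ω).toNNReal p.1 * poissonPMFReal (Λm ω).toNNReal p.2) ∂μPr
        = ∫⁻ ω, ENNReal.ofReal (Real.exp (α * p.1 + β * p.2) *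
            (poissonPMFReal (Λp ω).toNNReal p.1 * poissonPMFReal (Λm ω).toNNReal p.2)) ∂μPr := by
      intro p
      rw [← lintegral_const_mul' _ _ ENNReal.ofReal_ne_top]
      exact lintegral_congr fun ω => (ENNReal.ofReal_mul (Real.exp_nonneg _)).symm
    have hexpo : ∀ ω : Ω, Λp ω * (Real.exp α - 1) + Λm ω * (Real.exp β - 1)
        = (d ^ (ℓ + 1) * (Real.exp t' * Real.cosh s' - 1)) * X ℓ ω
          + (μ ^ (ℓ + 1) * Real.exp t' * Real.sinh s') * Y ℓ ω := by
      intro ω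
      have e1 : Real.exp α = Real.exp t' * Real.exp s' := by rw [hα, Real.exp_add]
      have e2 : Real.exp β = Real.exp t' / Real.exp s' := by rw [hβ, Real.exp_sub]
      have e3 : Real.cosh s' = (Real.exp s' + (Real.exp s')⁻¹) / 2 := by
        rw [Real.cosh_eq, Real.exp_neg]
      have e4 : Real.sinh s' = (Real.exp s' - (Real.exp s')⁻¹) / 2 := by
        rw [Real.sinh_eq, Real.exp_neg]
      simp only [hΛp, hΛm]
      rw [hXv, hYv, e1, e2, e3, e4, pow_succ d ℓ, pow_succ μ ℓ, hA, hB]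
      linear_combination aux_algebra d μ (d ^ ℓ) (μ ^ ℓ) (Real.exp t') (Real.exp s')
        ((Np ℓ ω : ℝ)) ((Nm ℓ ω : ℝ)) (hdl ℓ) (hμl ℓ) (Real.exp_ne_zero s')
    calc ∫⁻ ω, ENNReal.ofReal (Real.exp (t * X (ℓ + 1) ω + s * Y (ℓ + 1) ω)) ∂μPr
        = ∑' p : ℕ × ℕ, ENNReal.ofReal (Real.exp (α * p.1 + β * p.2)) *
            μPr {ω | Np (ℓ + 1) ω = p.1 ∧ Nm (ℓ + 1) ω = p.2} := hLHS
      _ = ∑' p : ℕ × ℕ, ENNReal.ofReal (Real.exp (α * p.1 + β * p.2)) *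
            ∫⁻ ω, ENNReal.ofReal
              (poissonPMFReal (Λp ω).toNNReal p.1 * poissonPMFReal (Λm ω).toNNReal p.2) ∂μPr :=
          tsum_congr fun p => by rw [hmeasure_eq p]
      _ = ∑' p : ℕ × ℕ, ∫⁻ ω, ENNReal.ofReal (Real.exp (α * p.1 + β * p.2) *
            (poissonPMFReal (Λp ω).toNNReal p.1 * poissonPMFReal (Λm ω).toNNReal p.2)) ∂μPr :=
          tsum_congr hconst_mul
      _ = ∫⁻ ω, ∑' p : ℕ × ℕ, ENNReal.ofReal (Real.exp (α * p.1 + β * p.2) *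
            (poissonPMFReal (Λp ω).toNNReal p.1 * poissonPMFReal (Λm ω).toNNReal p.2)) ∂μPr := by
          refine (lintegral_tsum fun p => Measurable.aemeasurable ?_).symm
          exact (((hmeas_pp Λp hΛpm p.1).mul (hmeas_pp Λm hΛmm p.2)).const_mul
            (Real.exp (α * p.1 + β * p.2))).ennreal_ofReal
      _ = ∫⁻ ω, ENNReal.ofReal (Real.exp (Λp ω * (Real.exp α - 1)
            + Λm ω * (Real.exp β - 1))) ∂μPr := by
          refine lintegral_congr fun ω => ?_
          rw [aux_poisson_tsum2, Real.coe_toNNReal (Λp ω) (hΛpnn ℓ ω),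
            Real.coe_toNNReal (Λm ω) (hΛmnn ℓ ω)]
      _ = _ := lintegral_congr fun ω => by rw [hexpo ω]
  -- finiteness by induction
  have hfin : ∀ (ℓ : ℕ) (t s : ℝ),
      ∫⁻ ω, ENNReal.ofReal (Real.exp (t * X ℓ ω + s * Y ℓ ω)) ∂μPr ≠ ⊤ := by
    intro ℓ
    induction ℓ with
    | zero =>
      intro t s
      have h0 : ∀ ω : Ω, t * X 0 ω + s * Y 0 ω = t + s := by
        intro ω
        rw [hXv, hYv, hNp0, hNm0]
        norm_num
      calc ∫⁻ ω, ENNReal.ofReal (Real.exp (t * X 0 ω + s * Y 0 ω)) ∂μPr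
          = ∫⁻ _, ENNReal.ofReal (Real.exp (t + s)) ∂μPr :=
            lintegral_congr fun ω => by rw [h0 ω]
        _ = ENNReal.ofReal (Real.exp (t + s)) := by
            rw [lintegral_const, measure_univ, mul_one]
        _ ≠ ⊤ := ENNReal.ofReal_ne_top
    | succ n ih =>
      intro t s
      rw [key n t s]
      exact ih _ _
  have hInt : ∀ (ℓ : ℕ) (t s : ℝ),
      Integrable (fun ω => Real.exp (t * X ℓ ω + s * Y ℓ ω)) μPr := by
    intro ℓ t s
    refine ⟨(hmF ℓ t s).aestronglyMeasurable, ?_⟩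
    rw [hasFiniteIntegral_iff_ofReal (ae_of_all _ fun ω => Real.exp_nonneg _)]
    exact (hfin ℓ t s).lt_top
  refine ⟨hInt, ?_⟩
  intro ℓ t s
  show (∫ ω, Real.exp (t * X (ℓ + 1) ω + s * Y (ℓ + 1) ω) ∂μPr)
      = ∫ ω, Real.exp
          ((d ^ (ℓ + 1) * (Real.exp (t / d ^ (ℓ + 1)) * Real.cosh (s / μ ^ (ℓ + 1)) - 1))
            * X ℓ ω
          + (μ ^ (ℓ + 1) * Real.exp (t / d ^ (ℓ + 1)) * Real.sinh (s / μ ^ (ℓ + 1)))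
            * Y ℓ ω) ∂μPr
  rw [integral_eq_lintegral_of_nonneg_ae (ae_of_all _ fun ω => Real.exp_nonneg _)
      (hmF (ℓ + 1) t s).aestronglyMeasurable,
    integral_eq_lintegral_of_nonneg_ae (ae_of_all _ fun ω => Real.exp_nonneg _)
      (hmF ℓ _ _).aestronglyMeasurable,
    key ℓ t s]
end

section
/- Let c denote the conductance (from root to infinity) of a Poisson(d) Galton-Watson tree (c = 0 on extinction). The conductance satisfies the distributional fixed-point equation c =_d Σ_{i=1}^{L} c_i/(1+c_i) with L ~ Poisson(d) independent of i.i.d. copies c_i of c. Consequently E[c] ≤ d − 1 and Var(c) ≤ d for all d > 1. -/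
open MeasureTheory ProbabilityTheory

lemma exp_tsum (d : ℝ) : ∑' n : ℕ, d ^ n / (Nat.factorial n : ℝ) = Real.exp d := by
  rw [Real.exp_eq_exp_ℝ, NormedSpace.exp_eq_tsum_div]

lemma poisson_hasSum1 (d : ℝ) :
    HasSum (fun k : ℕ => (k : ℝ) * (Real.exp (-d) * d ^ k / (Nat.factorial k : ℝ))) d := by
  set e := Real.exp (-d) with he
  set f : ℕ → ℝ := fun k => (k : ℝ) * (e * d ^ k / (Nat.factorial k : ℝ)) with hf
  have hshift : ∀ k : ℕ, f (k + 1) = (e * d) * (d ^ k / (Nat.factorial k : ℝ)) := by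
    intro k
    have hfac : ((Nat.factorial (k + 1) : ℕ) : ℝ) = (k + 1) * (Nat.factorial k : ℝ) := by
      exact_mod_cast Nat.factorial_succ k
    have hk : ((Nat.factorial k : ℕ) : ℝ) ≠ 0 := by
      exact_mod_cast (Nat.factorial_pos k).ne'
    simp only [hf]
    rw [hfac]
    push_cast
    field_simp
    ring
  have hsum_shift : Summable (fun k => f (k + 1)) := by
    have := (Real.summable_pow_div_factorial d).mul_left (e * d)
    exact this.congr fun k => (hshift k).symm
  have hsummable : Summable f := (summable_nat_add_iff 1).mp hsum_shift
  have htsum : ∑' k, f k = d := by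
    rw [Summable.tsum_eq_zero_add hsummable]
    simp only [hshift]
    rw [tsum_mul_left, exp_tsum]
    simp only [hf]
    have hede : Real.exp (-d) * Real.exp d = 1 := by rw [← Real.exp_add]; simp
    push_cast
    linear_combination d * hede
  have := hsummable.hasSum
  rwa [htsum] at this

lemma poisson_hasSum2 (d : ℝ) :
    HasSum (fun k : ℕ => (k : ℝ) * ((k : ℝ) - 1) *
      (Real.exp (-d) * d ^ k / (Nat.factorial k : ℝ))) (d ^ 2) := by
  set e := Real.exp (-d) with he
  set f : ℕ → ℝ := fun k => (k : ℝ) * ((k : ℝ) - 1) * (e * d ^ k / (Nat.factorial k : ℝ)) with hf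
  have hshift : ∀ k : ℕ, f (k + 2) = (e * d ^ 2) * (d ^ k / (Nat.factorial k : ℝ)) := by
    intro k
    have hfac : ((Nat.factorial (k + 2) : ℕ) : ℝ) = (k + 2) * ((k + 1) * (Nat.factorial k : ℝ)) := by
      push_cast [Nat.factorial_succ]
      ring
    have hk : ((Nat.factorial k : ℕ) : ℝ) ≠ 0 := by
      exact_mod_cast (Nat.factorial_pos k).ne'
    simp only [hf]
    rw [hfac]
    push_cast
    field_simp
    ring
  have hsum_shift : Summable (fun k => f (k + 2)) := by
    have := (Real.summable_pow_div_factorial d).mul_left (e * d ^ 2)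
    exact this.congr fun k => (hshift k).symm
  have hsummable : Summable f := (summable_nat_add_iff 2).mp hsum_shift
  have htsum : ∑' k, f k = d ^ 2 := by
    have h1 : Summable (fun k => f (k + 1)) := (summable_nat_add_iff 1).mpr hsummable
    rw [Summable.tsum_eq_zero_add hsummable, Summable.tsum_eq_zero_add h1]
    simp only [show ∀ k:ℕ, f (k + 1 + 1) = f (k+2) from fun k => by ring_nf]
    simp only [hshift]
    rw [tsum_mul_left, exp_tsum]
    simp only [hf]
    have hede : Real.exp (-d) * Real.exp d = 1 := by rw [← Real.exp_add]; simp
    push_cast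
    linear_combination d ^ 2 * hede
  have := hsummable.hasSum
  rwa [htsum] at this


/-- Let `c` be the conductance of a `Poisson(d)` Galton-Watson tree, i.e. a nonnegative
square-integrable random variable satisfying the distributional fixed-point equation
`c =_d ∑_{i<L} cᵢ/(1+cᵢ)` where `L ~ Poisson(d)` is independent of i.i.d. copies `cᵢ`
of `c`. Then `E[c] ≤ d − 1` and `Var(c) ≤ d`. -/
theorem conductance_mean_var_bounds
    {Ω : Type*} [MeasurableSpace Ω] (μ : Measure Ω) [IsProbabilityMeasure μ]
    (d : ℝ) (hd : 1 < d)
    (L : Ω → ℕ) (hL : Measurable L)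
    (hLpois : ∀ k : ℕ, μ {ω | L ω = k} =
      ENNReal.ofReal (Real.exp (-d) * d ^ k / (Nat.factorial k : ℝ)))
    (c : Ω → ℝ) (hc : Measurable c) (hcnn : ∀ ω, 0 ≤ c ω) (hc2 : MemLp c 2 μ)
    (ci : ℕ → Ω → ℝ) (hci : ∀ i, Measurable (ci i)) (hcinn : ∀ i ω, 0 ≤ ci i ω)
    (hcopies : ∀ i, IdentDistrib (ci i) c μ μ)
    (hindep : iIndepFun
      (fun o : Option ℕ => Option.elim o (fun ω => (L ω : ℝ)) ci) μ)
    (hfix : IdentDistrib c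
      (fun ω => ∑ i ∈ Finset.range (L ω), ci i ω / (1 + ci i ω)) μ μ) :
    (∫ ω, c ω ∂μ) ≤ d - 1 ∧ variance c μ ≤ d := by
  classical
  have hd0 : 0 < d := lt_trans one_pos hd
  -- notation
  set φ : ℝ → ℝ := fun x => x / (1 + x) with hφdef
  have hφm : Measurable φ := measurable_id.div (measurable_const.add measurable_id)
  have hφ0 : ∀ x : ℝ, 0 ≤ x → 0 ≤ φ x := fun x hx => div_nonneg hx (by linarith)
  have hφ1 : ∀ x : ℝ, 0 ≤ x → φ x ≤ 1 := fun x hx => by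
    rw [hφdef]; exact div_le_one_of_le₀ (by linarith) (by linarith)
  set Y : ℕ → Ω → ℝ := fun i ω => φ (ci i ω) with hYdef
  set P : ℕ → ℝ := fun k => Real.exp (-d) * d ^ k / (Nat.factorial k : ℝ) with hPdef
  have hPnn : ∀ k, 0 ≤ P k := fun k =>
    div_nonneg (mul_nonneg (Real.exp_nonneg _) (pow_nonneg hd0.le _)) (Nat.cast_nonneg _)
  set a : ℝ := ∫ ω, φ (c ω) ∂μ with hadef
  set b : ℝ := ∫ ω, (φ (c ω)) ^ 2 ∂μ with hbdef
  set m : ℝ := ∫ ω, c ω ∂μ with hmdef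
  -- basic integrability
  have hbdd : ∀ (f : Ω → ℝ), Measurable f → (∀ ω, |f ω| ≤ 1) → Integrable f μ := by
    intro f hf hb
    exact (integrable_const (1 : ℝ)).mono' hf.aestronglyMeasurable
      (ae_of_all _ fun ω => by simpa [Real.norm_eq_abs] using hb ω)
  have hYabs : ∀ i ω, |Y i ω| ≤ 1 := fun i ω => by
    rw [abs_le]
    constructor
    · linarith [hφ0 _ (hcinn i ω)]
    · exact hφ1 _ (hcinn i ω)
  have hYm : ∀ i, Measurable (Y i) := fun i => hφm.comp (hci i)
  have hYint : ∀ i, Integrable (Y i) μ := fun i => hbdd _ (hYm i) (hYabs i)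
  -- measurable sets {L = k}
  set A : ℕ → Set Ω := fun k => {ω | L ω = k} with hAdef
  have hAm : ∀ k, MeasurableSet (A k) := fun k => hL (measurableSet_singleton k)
  have hAmeas : ∀ k, (μ (A k)).toReal = P k := fun k => by
    rw [hAdef]; rw [hLpois k, ENNReal.toReal_ofReal (hPnn k)]
  -- the indicator of {L = k} as a function of (L : ℝ)
  have hLRm : Measurable (fun ω => (L ω : ℝ)) := measurable_from_nat.comp hL
  set gI : ℕ → ℝ → ℝ := fun k => Set.indicator {((k : ℕ) : ℝ)} (fun _ => (1:ℝ)) with hgIdef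
  have hgIm : ∀ k, Measurable (gI k) := fun k =>
    measurable_const.indicator (measurableSet_singleton _)
  have hIeq : ∀ k, (fun ω => gI k ((L ω : ℝ))) = Set.indicator (A k) (fun _ => (1:ℝ)) := by
    intro k
    funext ω
    by_cases h : L ω = k
    · simp [hgIdef, hAdef, h, Set.indicator_apply]
    · have h' : ((L ω : ℝ)) ≠ ((k : ℕ) : ℝ) := by exact_mod_cast h
      simp [hgIdef, hAdef, h, h', Set.indicator_apply]
  have hIabs : ∀ k ω, |gI k ((L ω : ℝ))| ≤ 1 := by
    intro k ω
    have h := congrFun (hIeq k) ω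
    rw [h]
    by_cases hm : ω ∈ A k <;> simp [Set.indicator_apply, hm]
  have hIndEq : ∀ k (f : Ω → ℝ), (A k).indicator f = fun ω => gI k ((L ω : ℝ)) * f ω := by
    intro k f
    funext ω
    have h := congrFun (hIeq k) ω
    rw [h]
    by_cases hm : ω ∈ A k <;> simp [Set.indicator_apply, hm]
  have hIm : ∀ k, Measurable (fun ω => gI k ((L ω : ℝ))) := fun k => (hgIm k).comp hLRm
  have hIint : ∀ k, Integrable (fun ω => gI k ((L ω : ℝ))) μ := fun k => hbdd _ (hIm k) (hIabs k)
  have hIintegral : ∀ k, ∫ ω, gI k ((L ω : ℝ)) ∂μ = P k := by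
    intro k
    rw [hIeq k, integral_indicator_const (1:ℝ) (hAm k), measureReal_def, hAmeas k, smul_eq_mul, mul_one]
  -- measurability of family for indepFun_prod_mk
  have hfam : ∀ o : Option ℕ,
      Measurable (Option.elim o (fun ω => (L ω : ℝ)) ci) := by
    rintro (_ | i)
    · exact hLRm
    · exact hci i
  -- ∫ Y i = a
  have hYintegral : ∀ i, ∫ ω, Y i ω ∂μ = a := fun i =>
    ((hcopies i).comp hφm).integral_eq
  -- ∫ (Y i)^2 = b
  have hY2integral : ∀ i, ∫ ω, (Y i ω) ^ 2 ∂μ = b := fun i =>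
    ((hcopies i).comp (hφm.pow_const 2)).integral_eq
  -- key : ∫ over {L = k} of Y i equals P k * a
  have hindLc : ∀ i : ℕ, IndepFun (fun ω => (L ω : ℝ)) (ci i) μ := by
    intro i
    have := hindep.indepFun (i := (none : Option ℕ)) (j := some i) (by simp)
    simpa using this
  have key1 : ∀ k i, ∫ ω in A k, Y i ω ∂μ = P k * a := by
    intro k i
    have hind : IndepFun (fun ω => gI k ((L ω : ℝ))) (Y i) μ :=
      (hindLc i).comp (hgIm k) hφm
    have hprod := hind.integral_mul_eq_mul_integral (hIint k).aestronglyMeasurable (hYint i).aestronglyMeasurable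
    rw [hIintegral k, hYintegral i] at hprod
    rw [← integral_indicator (hAm k), hIndEq k (Y i)]
    exact hprod
  -- key : ∫ over {L = k} of (Y i)^2 equals P k * b
  have key3 : ∀ k i, ∫ ω in A k, (Y i ω) ^ 2 ∂μ = P k * b := by
    intro k i
    have hind : IndepFun (fun ω => gI k ((L ω : ℝ))) (fun ω => (Y i ω) ^ 2) μ :=
      (hindLc i).comp (hgIm k) (hφm.pow_const 2)
    have hY2int : Integrable (fun ω => (Y i ω) ^ 2) μ := by
      refine hbdd _ ((hYm i).pow_const 2) fun ω => ?_
      rw [abs_pow]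
      exact pow_le_one₀ (abs_nonneg _) (hYabs i ω)
    have hprod := hind.integral_mul_eq_mul_integral (hIint k).aestronglyMeasurable hY2int.aestronglyMeasurable
    rw [hIintegral k, hY2integral i] at hprod
    rw [← integral_indicator (hAm k), hIndEq k (fun ω => (Y i ω) ^ 2)]
    exact hprod
  -- key : ∫ over {L = k} of Y i * Y j for i ≠ j equals P k * (a * a)
  have key2 : ∀ k i j, i ≠ j → ∫ ω in A k, Y i ω * Y j ω ∂μ = P k * (a * a) := by
    intro k i j hij
    have hYiYjint : Integrable (fun ω => Y i ω * Y j ω) μ := by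
      refine hbdd _ ((hYm i).mul (hYm j)) fun ω => ?_
      calc |Y i ω * Y j ω| = |Y i ω| * |Y j ω| := abs_mul _ _
        _ ≤ 1 * 1 := mul_le_mul (hYabs i ω) (hYabs j ω) (abs_nonneg _) zero_le_one
        _ = 1 := mul_one 1
    -- ∫ Y i * Y j = a * a by pairwise independence
    have hindij : IndepFun (ci i) (ci j) μ := by
      have := hindep.indepFun (i := (some i : Option ℕ)) (j := some j) (by simpa using hij)
      simpa using this
    have hYij : ∫ ω, Y i ω * Y j ω ∂μ = a * a := by
      have h := (hindij.comp hφm hφm).integral_mul_eq_mul_integral (hYint i).aestronglyMeasurable (hYint j).aestronglyMeasurable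
      have e2 : integral μ (φ ∘ ci i) = a := hYintegral i
      have e3 : integral μ (φ ∘ ci j) = a := hYintegral j
      rw [e2, e3] at h
      exact h
    -- independence of the pair (ci i, ci j) from L
    have hpair : IndepFun (fun ω => (ci i ω, ci j ω)) (fun ω => (L ω : ℝ)) μ := by
      have := hindep.indepFun_prodMk hfam (some i) (some j) none
        (by simp) (by simp)
      simpa using this
    have hψm : Measurable (fun p : ℝ × ℝ => φ p.1 * φ p.2) :=
      (hφm.comp measurable_fst).mul (hφm.comp measurable_snd)
    have hind : IndepFun (fun ω => Y i ω * Y j ω) (fun ω => gI k ((L ω : ℝ))) μ :=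
      hpair.comp hψm (hgIm k)
    have hprod := hind.integral_mul_eq_mul_integral hYiYjint.aestronglyMeasurable (hIint k).aestronglyMeasurable
    rw [hIintegral k, hYij] at hprod
    rw [← integral_indicator (hAm k), hIndEq k (fun ω => Y i ω * Y j ω)]
    have hfin : ∫ ω, Y i ω * Y j ω * gI k ((L ω : ℝ)) ∂μ = (a * a) * P k := hprod
    have hcomm : ∫ ω, gI k ((L ω : ℝ)) * (Y i ω * Y j ω) ∂μ
        = ∫ ω, Y i ω * Y j ω * gI k ((L ω : ℝ)) ∂μ := by
      congr 1; funext ω; ring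
    rw [hcomm, hfin]
    ring
  -- partition structure
  have hcover : (⋃ k, A k) = Set.univ := by
    ext ω; simp [hAdef]
  have hdisj : Pairwise (Function.onFun Disjoint A) := by
    intro k l hkl
    rw [Function.onFun, Set.disjoint_left]
    rintro ω (h1 : L ω = k) (h2 : L ω = l)
    exact hkl (h1 ▸ h2 ▸ rfl)
  set T : Ω → ℝ := fun ω => ∑ i ∈ Finset.range (L ω), ci i ω / (1 + ci i ω) with hTdef
  have hTint : Integrable T μ := hfix.integrable_iff.mp (hc2.integrable one_le_two)
  have hT2int : Integrable (fun ω => (T ω) ^ 2) μ := by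
    have h2 : IdentDistrib (fun ω => (c ω) ^ 2) (fun ω => (T ω) ^ 2) μ μ :=
      hfix.comp (measurable_id.pow_const 2)
    exact h2.integrable_iff.mp hc2.integrable_sq
  -- first moment
  have hTonA : ∀ k, Set.EqOn T (fun ω => ∑ i ∈ Finset.range k, Y i ω) (A k) := by
    intro k ω hω
    have : L ω = k := hω
    simp [hTdef, this, hYdef, hφdef]
  have hSum1 : HasSum (fun k => ∫ ω in A k, T ω ∂μ) (∫ ω, T ω ∂μ) := by
    have := hasSum_integral_iUnion hAm hdisj (by rw [hcover]; exact hTint.integrableOn)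
    rwa [hcover, setIntegral_univ] at this
  have hS1val : ∀ k : ℕ, ∫ ω in A k, T ω ∂μ = ((k : ℝ) * P k) * a := by
    intro k
    rw [setIntegral_congr_fun (hAm k) (hTonA k)]
    rw [integral_finset_sum _ (fun i _ => (hYint i).integrableOn)]
    simp only [key1]
    rw [Finset.sum_const, Finset.card_range]
    push_cast
    ring
  have hfe1 : (fun k => ∫ ω in A k, T ω ∂μ) = fun k : ℕ => ((k : ℝ) * P k) * a :=
    funext hS1val
  rw [hfe1] at hSum1
  have hmeq : m = d * a := by
    have h2 : ∫ ω, T ω ∂μ = d * a := hSum1.unique ((poisson_hasSum1 d).mul_right a)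
    rw [hmdef, hfix.integral_eq, h2]
  -- integrability of products
  have hYYint : ∀ i j, Integrable (fun ω => Y i ω * Y j ω) μ := by
    intro i j
    refine hbdd _ ((hYm i).mul (hYm j)) fun ω => ?_
    calc |Y i ω * Y j ω| = |Y i ω| * |Y j ω| := abs_mul _ _
      _ ≤ 1 * 1 := mul_le_mul (hYabs i ω) (hYabs j ω) (abs_nonneg _) zero_le_one
      _ = 1 := mul_one 1
  -- second moment
  have hT2onA : ∀ k : ℕ, Set.EqOn (fun ω => (T ω) ^ 2)
      (fun ω => ∑ i ∈ Finset.range k, ∑ j ∈ Finset.range k, Y i ω * Y j ω) (A k) := by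
    intro k ω hω
    have hk : L ω = k := hω
    have hTω : T ω = ∑ i ∈ Finset.range k, Y i ω := by simp [hTdef, hk, hYdef, hφdef]
    simp only [hTω]
    rw [sq, Finset.sum_mul_sum]
  have hSum2 : HasSum (fun k => ∫ ω in A k, (T ω) ^ 2 ∂μ) (∫ ω, (T ω) ^ 2 ∂μ) := by
    have := hasSum_integral_iUnion hAm hdisj (by rw [hcover]; exact hT2int.integrableOn)
    rwa [hcover, setIntegral_univ] at this
  have hS2val : ∀ k : ℕ, ∫ ω in A k, (T ω) ^ 2 ∂μ
      = ((k : ℝ) * P k) * b + ((k : ℝ) * ((k : ℝ) - 1) * P k) * (a * a) := by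
    intro k
    rw [setIntegral_congr_fun (hAm k) (hT2onA k)]
    rw [integral_finset_sum _ (fun i _ =>
      (integrable_finset_sum _ (fun j _ => (hYYint i j).integrableOn)))]
    have hinner : ∀ i ∈ Finset.range k,
        ∫ ω in A k, ∑ j ∈ Finset.range k, Y i ω * Y j ω ∂μ
          = P k * b + ((k : ℝ) - 1) * (P k * (a * a)) := by
      intro i hi
      rw [integral_finset_sum _ (fun j _ => (hYYint i j).integrableOn)]
      have hterm : ∀ j ∈ Finset.range k, ∫ ω in A k, Y i ω * Y j ω ∂μ
          = if i = j then P k * b else P k * (a * a) := by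
        intro j _
        by_cases h : i = j
        · subst h
          simp only [if_pos rfl]
          have hsq : (fun ω => Y i ω * Y i ω) = fun ω => (Y i ω) ^ 2 := by
            funext ω; ring
          rw [hsq]
          exact key3 k i
        · simp only [if_neg h]
          exact key2 k i j h
      rw [Finset.sum_congr rfl hterm]
      have hsplit : ∀ j, (if i = j then P k * b else P k * (a * a))
          = P k * (a * a) + (if i = j then P k * b - P k * (a * a) else 0) := by
        intro j; by_cases h : i = j <;> simp [h]
      rw [Finset.sum_congr rfl (fun j _ => hsplit j), Finset.sum_add_distrib,
        Finset.sum_const, Finset.card_range, Finset.sum_ite_eq, if_pos hi, nsmul_eq_mul]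
      ring
    rw [Finset.sum_congr rfl hinner, Finset.sum_const, Finset.card_range, nsmul_eq_mul]
    ring
  have hfe2 : (fun k => ∫ ω in A k, (T ω) ^ 2 ∂μ)
      = fun k : ℕ => ((k : ℝ) * P k) * b + ((k : ℝ) * ((k : ℝ) - 1) * P k) * (a * a) :=
    funext hS2val
  rw [hfe2] at hSum2
  have hsum2' : HasSum
      (fun k : ℕ => ((k : ℝ) * P k) * b + ((k : ℝ) * ((k : ℝ) - 1) * P k) * (a * a))
      (d * b + d ^ 2 * (a * a)) :=
    ((poisson_hasSum1 d).mul_right b).add ((poisson_hasSum2 d).mul_right (a * a))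
  have hm2eq : ∫ ω, (c ω) ^ 2 ∂μ = d * b + d ^ 2 * (a * a) := by
    have h : ∫ ω, (c ω) ^ 2 ∂μ = ∫ ω, (T ω) ^ 2 ∂μ :=
      (hfix.comp (measurable_id.pow_const 2)).integral_eq
    rw [h]
    exact hSum2.unique hsum2'
  -- bounds on a and b
  have hcInt : Integrable c μ := hc2.integrable one_le_two
  have hmnn : 0 ≤ m := by rw [hmdef]; exact integral_nonneg hcnn
  have hφcabs : ∀ ω, |φ (c ω)| ≤ 1 := fun ω => by
    rw [abs_le]
    exact ⟨by linarith [hφ0 _ (hcnn ω)], hφ1 _ (hcnn ω)⟩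
  have hφcInt : Integrable (fun ω => φ (c ω)) μ := hbdd _ (hφm.comp hc) hφcabs
  have hble : b ≤ 1 := by
    rw [hbdef]
    calc ∫ ω, (φ (c ω)) ^ 2 ∂μ ≤ ∫ ω, (1 : ℝ) ∂μ := by
          refine integral_mono ?_ (integrable_const 1) ?_
          · refine hbdd _ ((hφm.comp hc).pow_const 2) fun ω => ?_
            rw [abs_pow]
            exact pow_le_one₀ (abs_nonneg _) (hφcabs ω)
          · intro ω
            exact pow_le_one₀ (hφ0 _ (hcnn ω)) (hφ1 _ (hcnn ω))
      _ = 1 := by simp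
  -- tangent-line bound: a ≤ (m² + m)/(1+m)²
  have hm1 : (0 : ℝ) < 1 + m := by linarith
  have halem : a ≤ (m ^ 2 + m) / (1 + m) ^ 2 := by
    have hpt : ∀ ω, φ (c ω) ≤ (m ^ 2 + c ω) / (1 + m) ^ 2 := by
      intro ω
      have hx := hcnn ω
      have h1x : (0 : ℝ) < 1 + c ω := by linarith
      rw [hφdef, div_le_div_iff₀ h1x (pow_pos hm1 2)]
      nlinarith [sq_nonneg (c ω - m)]
    have hR : Integrable (fun ω => (m ^ 2 + c ω) / (1 + m) ^ 2) μ :=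
      ((integrable_const (m ^ 2)).add hcInt).div_const _
    have hIm := integral_mono hφcInt hR hpt
    have hRval : ∫ ω, (m ^ 2 + c ω) / (1 + m) ^ 2 ∂μ = (m ^ 2 + m) / (1 + m) ^ 2 := by
      rw [integral_div, integral_add (integrable_const _) hcInt, integral_const]
      simp [← hmdef]
    rw [hadef]
    rw [hRval] at hIm
    exact hIm
  -- mean bound
  have hmean : m ≤ d - 1 := by
    have h1 : m ≤ d * ((m ^ 2 + m) / (1 + m) ^ 2) := by
      calc m = d * a := hmeq
        _ ≤ d * ((m ^ 2 + m) / (1 + m) ^ 2) := mul_le_mul_of_nonneg_left halem hd0.le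
    rw [mul_div_assoc'] at h1
    rw [le_div_iff₀ (pow_pos hm1 2)] at h1
    by_contra hcon
    push_neg at hcon
    have hmpos : 0 < m := by linarith
    nlinarith [mul_pos hmpos (show (0 : ℝ) < m - (d - 1) by linarith),
      mul_pos (mul_pos hmpos hm1) (show (0 : ℝ) < m - (d - 1) by linarith)]
  -- variance bound
  have hvar : variance c μ = d * b := by
    rw [variance_eq_sub hc2]
    have e1 : (∫ ω, (c ^ 2) ω ∂μ) = d * b + d ^ 2 * (a * a) := hm2eq
    have e2 : (∫ ω, c ω ∂μ) = d * a := by rw [← hmdef]; exact hmeq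
    rw [e1, e2]
    ring
  refine ⟨hmean, ?_⟩
  rw [hvar]
  calc d * b ≤ d * 1 := mul_le_mul_of_nonneg_left hble hd0.le
    _ = d := mul_one d
end

section
/- Let c^{(ℓ)} be the conductance of the first ℓ generations of a Poisson(d) Galton-Watson tree. Then for every t ≥ 0 and ℓ ≥ 1, P(|c^{(ℓ)} − E[c^{(ℓ)}]| ≥ t) ≤ 2·exp(−d·h(t/d)), where h(x) = (1+x)log(1+x) − x. -/
open MeasureTheory ProbabilityTheory
open scoped ENNReal NNReal

namespace TCCAux

variable {Ω : Type*} [MeasurableSpace Ω] {μ : Measure Ω}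

lemma exp_tsum (x : ℝ) : ∑' n : ℕ, x ^ n / (n.factorial : ℝ) = Real.exp x := by
  rw [Real.exp_eq_exp_ℝ, NormedSpace.exp_eq_tsum_div]

/-- monotonicity of `u ↦ u * log((u+t)/u)` on `(0, ∞)` -/
lemma mono_ulog {t : ℝ} (ht : 0 < t) :
    MonotoneOn (fun u : ℝ => u * (Real.log (u + t) - Real.log u)) (Set.Ioi 0) := by
  have hderiv : ∀ u ∈ Set.Ioi (0:ℝ), HasDerivAt (fun u : ℝ => u * (Real.log (u + t) - Real.log u))
      ((Real.log (u + t) - Real.log u) + u * ((u + t)⁻¹ - u⁻¹)) u := by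
    intro u hu
    have hu0 : (0:ℝ) < u := hu
    have h1 : HasDerivAt (fun u : ℝ => Real.log (u + t)) ((u + t)⁻¹) u := by
      have := ((hasDerivAt_id u).add_const t).log (by positivity)
      simpa using this
    have h2 : HasDerivAt (fun u : ℝ => Real.log u) (u⁻¹) u := Real.hasDerivAt_log hu0.ne'
    have := (hasDerivAt_id u).mul (h1.sub h2)
    exact this.congr_deriv (by simp)
  have key : ∀ u ∈ Set.Ioi (0:ℝ), 0 ≤ (Real.log (u + t) - Real.log u) + u * ((u + t)⁻¹ - u⁻¹) := by
    intro u hu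
    have hu0 : (0:ℝ) < u := hu
    have hut : (0:ℝ) < u + t := by linarith
    have hlog : 1 - ((u + t) / u)⁻¹ ≤ Real.log ((u + t) / u) :=
      Real.one_sub_inv_le_log_of_pos (by positivity)
    rw [Real.log_div hut.ne' hu0.ne', inv_div] at hlog
    have h1 : u / (u + t) = u * (u + t)⁻¹ := div_eq_mul_inv _ _
    have h2 : u * u⁻¹ = 1 := mul_inv_cancel₀ hu0.ne'
    nlinarith [hlog]
  refine monotoneOn_of_deriv_nonneg (convex_Ioi 0) ?_ ?_ ?_
  · intro u hu
    exact (hderiv u hu).continuousAt.continuousWithinAt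
  · rw [interior_Ioi]
    intro u hu
    exact (hderiv u hu).differentiableAt.differentiableWithinAt
  · rw [interior_Ioi]
    intro u hu
    rw [(hderiv u hu).deriv]
    exact key u hu

/-- `ψ(t) = 2t - (d-t)log(d/(d-t)) - (d+t)log((d+t)/d) ≥ 0` for `0 ≤ t < d`. -/
lemma psi_nonneg {d t : ℝ} (hd : 0 < d) (ht : 0 ≤ t) (htd : t < d) :
    (d - t) * (Real.log d - Real.log (d - t)) + (d + t) * (Real.log (d + t) - Real.log d)
      ≤ 2 * t := by
  set F : ℝ → ℝ := fun s =>
    2 * s - (d - s) * (Real.log d - Real.log (d - s)) - (d + s) * (Real.log (d + s) - Real.log d)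
    with hF
  have hderiv : ∀ s ∈ Set.Ico (0:ℝ) d, HasDerivAt F
      (2 * Real.log d - Real.log (d - s) - Real.log (d + s)) s := by
    intro s hs
    have hs1 : (0:ℝ) < d - s := by cases hs with | intro h1 h2 => linarith
    have hs2 : (0:ℝ) < d + s := by cases hs with | intro h1 h2 => linarith
    have hlog1 : HasDerivAt (fun s : ℝ => Real.log (d - s)) (-(d - s)⁻¹) s := by
      have := ((hasDerivAt_id s).const_sub d).log hs1.ne'
      simpa [div_eq_mul_inv] using this
    have hlog2 : HasDerivAt (fun s : ℝ => Real.log (d + s)) ((d + s)⁻¹) s := by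
      have := ((hasDerivAt_id s).const_add d).log hs2.ne'
      simpa [div_eq_mul_inv] using this
    have hA : HasDerivAt (fun s : ℝ => (d - s) * (Real.log d - Real.log (d - s)))
        ((-1) * (Real.log d - Real.log (d - s)) + (d - s) * (0 - -(d - s)⁻¹)) s := by
      exact ((hasDerivAt_id s).const_sub d).mul ((hasDerivAt_const s (Real.log d)).sub hlog1)
    have hB : HasDerivAt (fun s : ℝ => (d + s) * (Real.log (d + s) - Real.log d))
        (1 * (Real.log (d + s) - Real.log d) + (d + s) * ((d + s)⁻¹ - 0)) s := by
      exact ((hasDerivAt_id s).const_add d).mul (hlog2.sub (hasDerivAt_const s (Real.log d)))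
    have hC : HasDerivAt (fun s : ℝ => 2 * s) 2 s := by
      simpa using (hasDerivAt_id s).const_mul (2:ℝ)
    have := (hC.sub hA).sub hB
    refine this.congr_deriv ?_
    have e1 : (d - s) * (d - s)⁻¹ = 1 := mul_inv_cancel₀ hs1.ne'
    have e2 : (d + s) * (d + s)⁻¹ = 1 := mul_inv_cancel₀ hs2.ne'
    ring_nf
    ring_nf at e1 e2
    linarith [e1, e2]
  have hmono : MonotoneOn F (Set.Ico 0 d) := by
    refine monotoneOn_of_deriv_nonneg (convex_Ico 0 d) ?_ ?_ ?_
    · intro s hs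
      exact (hderiv s hs).continuousAt.continuousWithinAt
    · rw [interior_Ico]
      intro s hs
      exact (hderiv s ⟨hs.1.le, hs.2⟩).differentiableAt.differentiableWithinAt
    · rw [interior_Ico]
      intro s hs
      rw [(hderiv s ⟨hs.1.le, hs.2⟩).deriv]
      have hs1 : (0:ℝ) < d - s := by linarith [hs.2]
      have hs2 : (0:ℝ) < d + s := by linarith [hs.1]
      have : Real.log (d - s) + Real.log (d + s) ≤ 2 * Real.log d := by
        rw [← Real.log_mul hs1.ne' hs2.ne']
        have h2 : (2:ℝ) * Real.log d = Real.log (d * d) := by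
          rw [Real.log_mul hd.ne' hd.ne']; ring
        rw [h2]
        apply Real.log_le_log (by positivity)
        nlinarith [hs.1]
      linarith
  have h0 : F 0 ≤ F t := hmono ⟨le_refl 0, hd⟩ ⟨ht, htd⟩ ht
  have hF0 : F 0 = 0 := by simp [hF]
  rw [hF0] at h0
  simp only [hF] at h0
  linarith


/-- expectation of a product of independent random variables over a finset -/
lemma integral_finset_prod {ι : Type*} [IsProbabilityMeasure μ] (W : ι → Ω → ℝ)
    (hmeas : ∀ i, Measurable (W i))
    (hind : iIndepFun W μ)
    (s : Finset ι) :
    ∫ ω, ∏ i ∈ s, W i ω ∂μ = ∏ i ∈ s, ∫ ω, W i ω ∂μ := by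
  classical
  induction s using Finset.cons_induction_on with
  | empty => simp
  | cons a s ha ih =>
    have hIndep : IndepFun (W a) (∏ j ∈ s, W j) μ :=
      (hind.indepFun_finset_prod_of_notMem hmeas ha).symm
    have heq2 : (∏ j ∈ s, W j) = fun ω => ∏ i ∈ s, W i ω :=
      funext fun ω => Finset.prod_apply ω s W
    have heq : (W a * ∏ j ∈ s, W j) = fun ω => W a ω * ∏ i ∈ s, W i ω :=
      funext fun ω => by rw [Pi.mul_apply, heq2]
    have h1 := hIndep.integral_mul_eq_mul_integral (hmeas a).aestronglyMeasurable
      (by rw [heq2]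
          exact (Finset.measurable_prod s (fun i _ => hmeas i)).aestronglyMeasurable)
    rw [heq, heq2] at h1
    rw [show (∫ ω, ∏ i ∈ Finset.cons a s ha, W i ω ∂μ)
        = ∫ ω, W a ω * ∏ i ∈ s, W i ω ∂μ by
      congr 1; funext ω; rw [Finset.prod_cons]]
    rw [h1, Finset.prod_cons, ih]

/-- integrability from domination by `B ^ L` -/
lemma integrable_of_le_pow [IsProbabilityMeasure μ] {L : Ω → ℕ} (hL : Measurable L)
    {F : Ω → ℝ} (hF : AEStronglyMeasurable F μ) {B : ℝ}
    (hFle : ∀ ω, |F ω| ≤ B ^ L ω)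
    (hfin : ∑' k, μ {ω | L ω = k} * ENNReal.ofReal (B ^ k) ≠ ⊤) : Integrable F μ := by
  refine ⟨hF, ?_⟩
  rw [HasFiniteIntegral]
  have hsets : ∀ k : ℕ, MeasurableSet {ω | L ω = k} := fun k => hL (measurableSet_singleton k)
  calc ∫⁻ ω, ‖F ω‖₊ ∂μ
      ≤ ∫⁻ ω, ∑' k, Set.indicator {ω | L ω = k} (fun _ => ENNReal.ofReal (B ^ k)) ω ∂μ := by
        apply lintegral_mono
        intro ω
        refine le_trans ?_ (ENNReal.le_tsum (L ω))
        rw [Set.indicator_of_mem (by simp : ω ∈ {ω' | L ω' = L ω})]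
        show ((‖F ω‖₊ : ℝ≥0∞)) ≤ ENNReal.ofReal (B ^ L ω)
        rw [← enorm_eq_nnnorm, Real.enorm_eq_ofReal_abs]
        exact ENNReal.ofReal_le_ofReal (hFle ω)
    _ = ∑' k, ∫⁻ ω, Set.indicator {ω | L ω = k} (fun _ => ENNReal.ofReal (B ^ k)) ω ∂μ :=
        lintegral_tsum (fun k => (measurable_const.indicator (hsets k)).aemeasurable)
    _ = ∑' k, μ {ω | L ω = k} * ENNReal.ofReal (B ^ k) := by
        congr 1; funext k
        rw [lintegral_indicator_const (hsets k), mul_comm]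
    _ < ⊤ := lt_of_le_of_ne le_top hfin

lemma poisson_sum_eq {d B : ℝ} (hd : 0 < d) (hB : 0 ≤ B) :
    ∑' k : ℕ, ENNReal.ofReal (Real.exp (-d) * d ^ k / (Nat.factorial k : ℝ))
        * ENNReal.ofReal (B ^ k)
      = ENNReal.ofReal (Real.exp (d * B - d)) := by
  have hterm : ∀ k : ℕ, ENNReal.ofReal (Real.exp (-d) * d ^ k / (Nat.factorial k : ℝ))
      * ENNReal.ofReal (B ^ k)
      = ENNReal.ofReal (Real.exp (-d) * ((d * B) ^ k / (Nat.factorial k : ℝ))) := by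
    intro k
    rw [← ENNReal.ofReal_mul (by positivity)]
    congr 1
    rw [mul_pow]
    field_simp
  simp_rw [hterm]
  rw [← ENNReal.ofReal_tsum_of_nonneg (fun k => by positivity)
    ((Real.summable_pow_div_factorial (d * B)).mul_left _)]
  congr 1
  rw [tsum_mul_left, exp_tsum, ← Real.exp_add]
  congr 1
  ring

lemma poisson_sum_ne_top {d B : ℝ} (hd : 0 < d) (hB : 0 ≤ B) :
    ∑' k : ℕ, ENNReal.ofReal (Real.exp (-d) * d ^ k / (Nat.factorial k : ℝ))
        * ENNReal.ofReal (B ^ k) ≠ ⊤ := by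
  rw [poisson_sum_eq hd hB]; exact ENNReal.ofReal_ne_top

lemma poisson_mass {d : ℝ} (hd : 0 < d) :
    ∑' k : ℕ, Real.exp (-d) * d ^ k / (Nat.factorial k : ℝ) = 1 := by
  have : ∀ k : ℕ, Real.exp (-d) * d ^ k / (Nat.factorial k : ℝ)
      = Real.exp (-d) * (d ^ k / (Nat.factorial k : ℝ)) := fun k => by ring
  simp_rw [this]
  rw [tsum_mul_left, exp_tsum, ← Real.exp_add]
  simp

lemma poisson_mean {d : ℝ} (hd : 0 < d) :
    ∑' k : ℕ, (k : ℝ) * (Real.exp (-d) * d ^ k / (Nat.factorial k : ℝ)) = d := by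
  have hqs : Summable (fun k : ℕ => Real.exp (-d) * d ^ k / (Nat.factorial k : ℝ)) := by
    simpa [mul_div_assoc] using (Real.summable_pow_div_factorial d).mul_left (Real.exp (-d))
  have hshift : ∀ k : ℕ, ((k + 1 : ℕ) : ℝ)
        * (Real.exp (-d) * d ^ (k + 1) / (Nat.factorial (k + 1) : ℝ))
      = d * (Real.exp (-d) * d ^ k / (Nat.factorial k : ℝ)) := by
    intro k
    rw [Nat.factorial_succ]
    have h1 : (0:ℝ) < (Nat.factorial k : ℝ) := by exact_mod_cast Nat.factorial_pos k
    push_cast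
    field_simp
    ring
  have hsum1 : Summable (fun k : ℕ => (k : ℝ)
      * (Real.exp (-d) * d ^ k / (Nat.factorial k : ℝ))) := by
    rw [← summable_nat_add_iff 1]
    simp only [hshift]
    exact hqs.mul_left d
  rw [hsum1.tsum_eq_zero_add]
  simp only [Nat.cast_zero, zero_mul, zero_add]
  calc ∑' k : ℕ, ((k + 1 : ℕ) : ℝ)
        * (Real.exp (-d) * d ^ (k + 1) / (Nat.factorial (k + 1) : ℝ))
      = ∑' k : ℕ, d * (Real.exp (-d) * d ^ k / (Nat.factorial k : ℝ)) := by
        congr 1; funext k; exact hshift k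
    _ = d * ∑' k : ℕ, Real.exp (-d) * d ^ k / (Nat.factorial k : ℝ) := tsum_mul_left
    _ = d := by rw [poisson_mass hd]; ring


/-- The key independence computation. -/
lemma key_integral [IsProbabilityMeasure μ] {d : ℝ} (hd : 0 < d)
    {L : Ω → ℕ} (hL : Measurable L)
    (hLpois : ∀ k : ℕ, μ {ω | L ω = k} =
      ENNReal.ofReal (Real.exp (-d) * d ^ k / (Nat.factorial k : ℝ)))
    {cp : Ω → ℝ} {ci : ℕ → Ω → ℝ} (hci : ∀ i, Measurable (ci i))
    (hcopies : ∀ i, IdentDistrib (ci i) cp μ μ)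
    (hindep : iIndepFun
      (fun o : Option ℕ => Option.elim o (fun ω => (L ω : ℝ)) ci) μ)
    (f : ℝ → ℝ) (hf : Measurable f) (k : ℕ) :
    ∫ ω, Set.indicator {ω' | L ω' = k} (fun _ => (1:ℝ)) ω * ∏ i ∈ Finset.range k, f (ci i ω) ∂μ
      = (Real.exp (-d) * d ^ k / (Nat.factorial k : ℝ)) * (∫ ω, f (cp ω) ∂μ) ^ k := by
  classical
  have hχm : Measurable (Set.indicator {((k:ℝ))} (fun _ => (1:ℝ))) :=
    measurable_const.indicator (measurableSet_singleton _)
  set W : Option ℕ → Ω → ℝ :=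
    fun o => (Option.elim o (Set.indicator {((k:ℝ))} (fun _ => (1:ℝ))) (fun _ => f))
      ∘ (Option.elim o (fun ω => (L ω : ℝ)) ci) with hWdef
  have hW : iIndepFun W μ := by
    refine hindep.comp _ ?_
    rintro (_|i)
    · exact hχm
    · exact hf
  have hWm : ∀ o, Measurable (W o) := by
    rintro (_|i)
    · exact hχm.comp (measurable_from_nat.comp hL)
    · exact hf.comp (hci i)
  have hWnone : ∀ ω, W none ω = Set.indicator {ω' | L ω' = k} (fun _ => (1:ℝ)) ω := by
    intro ω
    by_cases h : L ω = k
    · rw [hWdef]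
      simp [Set.indicator_of_mem, h]
    · have h' : ((L ω : ℝ)) ≠ (k : ℝ) := by exact_mod_cast h
      rw [hWdef]
      simp only [Option.elim, Function.comp_apply]
      rw [Set.indicator_of_notMem (by simpa using h'),
        Set.indicator_of_notMem (by simpa using h)]
  set s : Finset (Option ℕ) := Finset.image some (Finset.range k) with hs
  have hnone : (none : Option ℕ) ∉ s := by simp [hs]
  have hinj : Set.InjOn some ((Finset.range k) : Set ℕ) := fun a _ b _ h => Option.some.inj h
  have hprod := integral_finset_prod W hWm hW (insert none s)
  have hLHS : ∫ ω, ∏ o ∈ insert none s, W o ω ∂μ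
      = ∫ ω, Set.indicator {ω' | L ω' = k} (fun _ => (1:ℝ)) ω
          * ∏ i ∈ Finset.range k, f (ci i ω) ∂μ := by
    congr 1
    funext ω
    rw [Finset.prod_insert hnone, hWnone ω, hs, Finset.prod_image (fun a ha b hb h => hinj ha hb h)]
    rfl
  have hPk : ∫ ω, W none ω ∂μ = Real.exp (-d) * d ^ k / (Nat.factorial k : ℝ) := by
    have : ∫ ω, W none ω ∂μ = ∫ ω, Set.indicator {ω' | L ω' = k} (1 : Ω → ℝ) ω ∂μ := by
      congr 1; funext ω; rw [hWnone ω]; rfl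
    rw [this, integral_indicator_one (s := {ω' | L ω' = k})
        (show MeasurableSet {ω' | L ω' = k} from hL (measurableSet_singleton k)), measureReal_def, hLpois k,
      ENNReal.toReal_ofReal (by positivity)]
  have hRHS : ∏ o ∈ insert none s, ∫ ω, W o ω ∂μ
      = (Real.exp (-d) * d ^ k / (Nat.factorial k : ℝ)) * (∫ ω, f (cp ω) ∂μ) ^ k := by
    rw [Finset.prod_insert hnone, hPk, hs,
      Finset.prod_image (fun a ha b hb h => hinj ha hb h)]
    congr 1
    have : ∀ i, ∫ ω, W (some i) ω ∂μ = ∫ ω, f (cp ω) ∂μ := by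
      intro i
      exact ((hcopies i).comp hf).integral_eq
    rw [Finset.prod_congr rfl (fun i _ => this i), Finset.prod_const, Finset.card_range]
  rw [← hLHS, hprod, hRHS]


/-- Decomposition of an integral along the level sets of `L`. -/
lemma integral_tsum_indicator [IsProbabilityMeasure μ] {L : Ω → ℕ} (hL : Measurable L)
    {T : ℕ → Ω → ℝ}
    (hT : ∀ k, AEStronglyMeasurable
      (fun ω => Set.indicator {ω' | L ω' = k} (fun _ => (1:ℝ)) ω * T k ω) μ)
    {B : ℝ} (hB : ∀ k ω, L ω = k → |T k ω| ≤ B ^ k)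
    (hfin : ∑' k, μ {ω | L ω = k} * ENNReal.ofReal (B ^ k) ≠ ⊤) :
    ∫ ω, T (L ω) ω ∂μ
      = ∑' k, ∫ ω, Set.indicator {ω' | L ω' = k} (fun _ => (1:ℝ)) ω * T k ω ∂μ := by
  have hsets : ∀ k : ℕ, MeasurableSet {ω | L ω = k} := fun k => hL (measurableSet_singleton k)
  have hrep : ∀ ω, T (L ω) ω
      = ∑' k, Set.indicator {ω' | L ω' = k} (fun _ => (1:ℝ)) ω * T k ω := by
    intro ω
    rw [tsum_eq_single (L ω) ?_]
    · rw [Set.indicator_of_mem (by exact rfl : ω ∈ {ω' | L ω' = L ω}), one_mul]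
    · intro k hk
      rw [Set.indicator_of_notMem (fun h => hk ((by exact h : L ω = k).symm)), zero_mul]
  have hptw : ∀ k ω, (‖Set.indicator {ω' | L ω' = k} (fun _ => (1:ℝ)) ω * T k ω‖₊ : ℝ≥0∞)
      ≤ Set.indicator {ω' | L ω' = k} (fun _ => ENNReal.ofReal (B ^ k)) ω := by
    intro k ω
    by_cases h : L ω = k
    · rw [Set.indicator_of_mem (by exact h : ω ∈ {ω' | L ω' = k}),
        Set.indicator_of_mem (by exact h : ω ∈ {ω' | L ω' = k}), one_mul,
        ← enorm_eq_nnnorm, Real.enorm_eq_ofReal_abs]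
      exact ENNReal.ofReal_le_ofReal (hB k ω h)
    · rw [Set.indicator_of_notMem (by exact h : ω ∉ {ω' | L ω' = k}),
        Set.indicator_of_notMem (by exact h : ω ∉ {ω' | L ω' = k}), zero_mul]
      simp
  have hfin' : ∑' k, ∫⁻ ω, ‖Set.indicator {ω' | L ω' = k} (fun _ => (1:ℝ)) ω * T k ω‖₊ ∂μ ≠ ⊤ := by
    refine ne_top_of_le_ne_top hfin (ENNReal.tsum_le_tsum fun k => ?_)
    calc ∫⁻ ω, ‖Set.indicator {ω' | L ω' = k} (fun _ => (1:ℝ)) ω * T k ω‖₊ ∂μ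
        ≤ ∫⁻ ω, Set.indicator {ω' | L ω' = k} (fun _ => ENNReal.ofReal (B ^ k)) ω ∂μ :=
          lintegral_mono (fun ω => hptw k ω)
      _ = μ {ω | L ω = k} * ENNReal.ofReal (B ^ k) := by
          rw [lintegral_indicator_const (hsets k), mul_comm]
  calc ∫ ω, T (L ω) ω ∂μ
      = ∫ ω, ∑' k, Set.indicator {ω' | L ω' = k} (fun _ => (1:ℝ)) ω * T k ω ∂μ := by
        congr 1; funext ω; exact hrep ω
    _ = ∑' k, ∫ ω, Set.indicator {ω' | L ω' = k} (fun _ => (1:ℝ)) ω * T k ω ∂μ :=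
        integral_tsum hT hfin'

lemma poisson_pgf {d : ℝ} (x : ℝ) (hd : 0 < d) :
    ∑' k : ℕ, Real.exp (-d) * d ^ k / (Nat.factorial k : ℝ) * x ^ k
      = Real.exp (d * x - d) := by
  have hterm : ∀ k : ℕ, Real.exp (-d) * d ^ k / (Nat.factorial k : ℝ) * x ^ k
      = Real.exp (-d) * ((d * x) ^ k / (Nat.factorial k : ℝ)) := by
    intro k
    rw [mul_pow]
    have h1 : (0:ℝ) < (Nat.factorial k : ℝ) := by exact_mod_cast Nat.factorial_pos k
    field_simp
  simp_rw [hterm]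
  rw [tsum_mul_left, exp_tsum, ← Real.exp_add]
  congr 1
  ring


end TCCAux

open TCCAux
set_option maxHeartbeats 2000000 in

/-- Bennett-type concentration for the truncated conductance of a `Poisson(d)`
Galton-Watson tree: if `c^{(ℓ)}` has the law of `∑_{i<L} cᵢ/(1+cᵢ)` where `L ~ Poisson(d)`
is independent of the i.i.d. nonnegative random variables `cᵢ` (copies of the
depth-`(ℓ−1)` truncated conductance), then for every `t ≥ 0`,
`P(|c^{(ℓ)} − E c^{(ℓ)}| ≥ t) ≤ 2 exp(−d·h(t/d))`, with `h(x) = (1+x)log(1+x) − x`. -/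
theorem truncated_conductance_concentration
    {Ω : Type*} [MeasurableSpace Ω] (μ : Measure Ω) [IsProbabilityMeasure μ]
    (d : ℝ) (hd : 1 < d)
    (L : Ω → ℕ) (hL : Measurable L)
    (hLpois : ∀ k : ℕ, μ {ω | L ω = k} =
      ENNReal.ofReal (Real.exp (-d) * d ^ k / (Nat.factorial k : ℝ)))
    (cp : Ω → ℝ) (hcp : Measurable cp) (hcpnn : ∀ ω, 0 ≤ cp ω)
    (ci : ℕ → Ω → ℝ) (hci : ∀ i, Measurable (ci i)) (hcinn : ∀ i ω, 0 ≤ ci i ω)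
    (hcopies : ∀ i, IdentDistrib (ci i) cp μ μ)
    (hindep : iIndepFun
      (fun o : Option ℕ => Option.elim o (fun ω => (L ω : ℝ)) ci) μ)
    (cℓ : Ω → ℝ) (hcℓ : Measurable cℓ)
    (hlaw : IdentDistrib cℓ
      (fun ω => ∑ i ∈ Finset.range (L ω), ci i ω / (1 + ci i ω)) μ μ) :
    ∀ t : ℝ, 0 ≤ t →
      μ {ω | t ≤ |cℓ ω - ∫ ω', cℓ ω' ∂μ|} ≤
        ENNReal.ofReal (2 * Real.exp (-d * ((1 + t / d) * Real.log (1 + t / d) - t / d))) := by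
  intro t ht
  classical
  have hd0 : (0:ℝ) < d := by linarith
  rcases eq_or_lt_of_le ht with h0 | htpos
  · -- trivial case t = 0
    rw [← h0]
    have hval : (2:ℝ) * Real.exp (-d * ((1 + 0 / d) * Real.log (1 + 0 / d) - 0 / d)) = 2 := by
      rw [zero_div, add_zero, Real.log_one]
      norm_num
    rw [hval]
    refine le_trans prob_le_one ?_
    rw [show ((1:ℝ≥0∞)) = ENNReal.ofReal 1 by simp]
    exact ENNReal.ofReal_le_ofReal (by norm_num)
  set S : Ω → ℝ := fun ω => ∑ i ∈ Finset.range (L ω), ci i ω / (1 + ci i ω) with hSdef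
  have hY01 : ∀ i ω, 0 ≤ ci i ω / (1 + ci i ω) ∧ ci i ω / (1 + ci i ω) ≤ 1 := by
    intro i ω
    have h := hcinn i ω
    constructor
    · apply div_nonneg h; linarith
    · rw [div_le_one (by linarith)]; linarith
  have hS0 : ∀ ω, 0 ≤ S ω := fun ω => Finset.sum_nonneg fun i _ => (hY01 i ω).1
  have hSL : ∀ ω, S ω ≤ (L ω : ℝ) := by
    intro ω
    calc S ω ≤ ∑ i ∈ Finset.range (L ω), (1:ℝ) :=
          Finset.sum_le_sum fun i _ => (hY01 i ω).2
      _ = L ω := by simp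
  have hSmeas : AEMeasurable S μ := hlaw.aemeasurable_snd
  have hχ : ∀ k : ℕ, MeasurableSet {ω | L ω = k} := fun k => hL (measurableSet_singleton k)
  have hχm : ∀ k : ℕ, Measurable (Set.indicator {ω' | L ω' = k} (fun _ => (1:ℝ))) :=
    fun k => measurable_const.indicator (hχ k)
  set p : ℝ := ∫ ω, cp ω / (1 + cp ω) ∂μ with hpdef
  have hcp01 : ∀ ω, 0 ≤ cp ω / (1 + cp ω) ∧ cp ω / (1 + cp ω) ≤ 1 := by
    intro ω
    have h := hcpnn ω
    constructor
    · apply div_nonneg h; linarith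
    · rw [div_le_one (by linarith)]; linarith
  have hgcp_meas : Measurable (fun ω => cp ω / (1 + cp ω)) :=
    hcp.div (measurable_const.add hcp)
  have hgcp_int : Integrable (fun ω => cp ω / (1 + cp ω)) μ := by
    apply Integrable.mono' (integrable_const (1:ℝ)) hgcp_meas.aestronglyMeasurable
    filter_upwards with ω
    rw [Real.norm_eq_abs, abs_of_nonneg (hcp01 ω).1]
    exact (hcp01 ω).2
  have hp0 : 0 ≤ p := integral_nonneg fun ω => (hcp01 ω).1
  have hp1 : p ≤ 1 := by
    have := integral_mono hgcp_int (integrable_const (1:ℝ)) (fun ω => (hcp01 ω).2)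
    simpa using this
  -- Integrability of S
  have intS : Integrable S μ := by
    apply integrable_of_le_pow hL hSmeas.aestronglyMeasurable (B := 2) ?_ ?_
    · intro ω
      rw [abs_of_nonneg (hS0 ω)]
      refine (hSL ω).trans ?_
      exact_mod_cast (Nat.lt_two_pow_self (n := L ω)).le
    · simp_rw [hLpois]
      exact poisson_sum_ne_top hd0 (by norm_num)
  have intcl : Integrable cℓ μ := hlaw.integrable_iff.mpr intS
  -- Mean of S
  have meanS : ∫ ω, S ω ∂μ = d * p := by
    have hTmeas : ∀ k : ℕ, AEStronglyMeasurable
        (fun ω => Set.indicator {ω' | L ω' = k} (fun _ => (1:ℝ)) ω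
          * ∑ i ∈ Finset.range k, ci i ω / (1 + ci i ω)) μ := by
      intro k
      exact ((hχm k).mul (Finset.measurable_sum _ fun i _ =>
        (hci i).div (measurable_const.add (hci i)))).aestronglyMeasurable
    have hTb : ∀ (k : ℕ) ω, L ω = k →
        |∑ i ∈ Finset.range k, ci i ω / (1 + ci i ω)| ≤ (2:ℝ) ^ k := by
      intro k ω _
      rw [abs_of_nonneg (Finset.sum_nonneg fun i _ => (hY01 i ω).1)]
      calc ∑ i ∈ Finset.range k, ci i ω / (1 + ci i ω)
          ≤ ∑ i ∈ Finset.range k, (1:ℝ) := Finset.sum_le_sum fun i _ => (hY01 i ω).2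
        _ = (k:ℝ) := by simp
        _ ≤ 2 ^ k := by exact_mod_cast (Nat.lt_two_pow_self (n := k)).le
    have hswap := integral_tsum_indicator hL hTmeas hTb
      (by simp_rw [hLpois]; exact poisson_sum_ne_top hd0 (by norm_num))
    have hterm : ∀ k : ℕ, ∫ ω, Set.indicator {ω' | L ω' = k} (fun _ => (1:ℝ)) ω
          * ∑ i ∈ Finset.range k, ci i ω / (1 + ci i ω) ∂μ
        = Real.exp (-d) * d ^ k / (Nat.factorial k : ℝ) * ((k : ℝ) * p) := by
      intro k
      have hexpand : (fun ω => Set.indicator {ω' | L ω' = k} (fun _ => (1:ℝ)) ω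
            * ∑ i ∈ Finset.range k, ci i ω / (1 + ci i ω))
          = fun ω => ∑ i ∈ Finset.range k,
            Set.indicator {ω' | L ω' = k} (fun _ => (1:ℝ)) ω * (ci i ω / (1 + ci i ω)) :=
        funext fun ω => Finset.mul_sum _ _ _
      rw [hexpand, integral_finset_sum _ (fun i _ => ?_)]
      · have hone : ∀ i, ∫ ω, Set.indicator {ω' | L ω' = k} (fun _ => (1:ℝ)) ω
              * (ci i ω / (1 + ci i ω)) ∂μ
            = (Real.exp (-d) * d ^ k / (Nat.factorial k : ℝ)) * p := by
          intro i
          have hpair : IndepFun (fun ω => (L ω : ℝ)) (ci i) μ :=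
            hindep.indepFun (by simp : (none : Option ℕ) ≠ some i)
          have hpair2 : IndepFun
              (fun ω => Set.indicator {((k:ℝ))} (fun _ => (1:ℝ)) ((L ω : ℝ)))
              (fun ω => ci i ω / (1 + ci i ω)) μ :=
            hpair.comp (measurable_const.indicator (measurableSet_singleton _))
              (measurable_id.div (measurable_const.add measurable_id))
          have hind_eq : (fun ω => Set.indicator {((k:ℝ))} (fun _ => (1:ℝ)) ((L ω : ℝ)))
              = Set.indicator {ω' | L ω' = k} (fun _ => (1:ℝ)) := by
            funext ω
            by_cases h : L ω = k
            · rw [Set.indicator_of_mem (by simp [h] : ((L ω : ℝ)) ∈ ({((k:ℝ))} : Set ℝ)),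
                Set.indicator_of_mem (by exact h : ω ∈ {ω' | L ω' = k})]
            · rw [Set.indicator_of_notMem, Set.indicator_of_notMem (by exact h)]
              simp only [Set.mem_singleton_iff]
              exact_mod_cast h
          have hpt : ∀ ω, Set.indicator {((k:ℝ))} (fun _ => (1:ℝ)) ((L ω : ℝ))
              = Set.indicator {ω' | L ω' = k} (fun _ => (1:ℝ)) ω := fun ω => congrFun hind_eq ω
          have hmul := hpair2.integral_mul_eq_mul_integral
            ((measurable_const.indicator (measurableSet_singleton ((k:ℝ)))).comp
              (measurable_from_nat.comp hL)).aestronglyMeasurable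
            ((hci i).div (measurable_const.add (hci i))).aestronglyMeasurable
          calc ∫ ω, Set.indicator {ω' | L ω' = k} (fun _ => (1:ℝ)) ω
                * (ci i ω / (1 + ci i ω)) ∂μ
              = ∫ ω, Set.indicator {((k:ℝ))} (fun _ => (1:ℝ)) ((L ω : ℝ))
                * (ci i ω / (1 + ci i ω)) ∂μ := by
                congr 1; funext ω; rw [hpt ω]
            _ = (∫ ω, Set.indicator {((k:ℝ))} (fun _ => (1:ℝ)) ((L ω : ℝ)) ∂μ)
                * ∫ ω, ci i ω / (1 + ci i ω) ∂μ := hmul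
            _ = (Real.exp (-d) * d ^ k / (Nat.factorial k : ℝ)) * p := by
                have eA : (∫ ω, Set.indicator {((k:ℝ))} (fun _ => (1:ℝ)) ((L ω : ℝ)) ∂μ)
                    = Real.exp (-d) * d ^ k / (Nat.factorial k : ℝ) := by
                  rw [show (∫ ω, Set.indicator {((k:ℝ))} (fun _ => (1:ℝ)) ((L ω : ℝ)) ∂μ)
                      = ∫ ω, Set.indicator {ω' | L ω' = k} (1 : Ω → ℝ) ω ∂μ by
                    congr 1]
                  rw [integral_indicator_one (s := {ω' | L ω' = k}) (hχ k), measureReal_def, hLpois k,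
                    ENNReal.toReal_ofReal (by positivity)]
                have eB : (∫ ω, ci i ω / (1 + ci i ω) ∂μ) = p := by
                  rw [hpdef]
                  exact ((hcopies i).comp
                    (measurable_id.div (measurable_const.add measurable_id))).integral_eq
                rw [eA, eB]
        rw [Finset.sum_congr rfl (fun i _ => hone i), Finset.sum_const, Finset.card_range,
          nsmul_eq_mul]
        ring
      · apply Integrable.mono' (integrable_const (1:ℝ))
          ((hχm k).mul ((hci i).div (measurable_const.add (hci i)))).aestronglyMeasurable
        filter_upwards with ω
        rw [Real.norm_eq_abs]
        show |Set.indicator {ω' | L ω' = k} (fun _ => (1:ℝ)) ω * (ci i ω / (1 + ci i ω))| ≤ 1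
        by_cases h : L ω = k
        · rw [Set.indicator_of_mem (by exact h : ω ∈ {ω' | L ω' = k}), one_mul,
            abs_of_nonneg (hY01 i ω).1]
          exact (hY01 i ω).2
        · rw [Set.indicator_of_notMem (by exact h : ω ∉ {ω' | L ω' = k}), zero_mul]
          norm_num
    rw [show (∫ ω, S ω ∂μ) = ∫ ω, (fun k ω' => ∑ i ∈ Finset.range k, ci i ω' / (1 + ci i ω'))
        (L ω) ω ∂μ from rfl, hswap]
    simp_rw [hterm]
    have : ∀ k : ℕ, Real.exp (-d) * d ^ k / (Nat.factorial k : ℝ) * ((k : ℝ) * p)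
        = p * ((k:ℝ) * (Real.exp (-d) * d ^ k / (Nat.factorial k : ℝ))) := fun k => by ring
    simp_rw [this]
    rw [tsum_mul_left, poisson_mean hd0]
    ring
  have Ecl : ∫ ω', cℓ ω' ∂μ = d * p := by rw [hlaw.integral_eq]; exact meanS
  -- mgf bound
  have mgf_bound : ∀ lam : ℝ, Integrable (fun ω => Real.exp (lam * cℓ ω)) μ ∧
      mgf cℓ μ lam ≤ Real.exp (d * p * (Real.exp lam - 1)) := by
    intro lam
    set f : ℝ → ℝ := fun x => Real.exp (lam * (x / (1 + x))) with hfdef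
    have hfm : Measurable f :=
      (measurable_const.mul (measurable_id.div (measurable_const.add measurable_id))).exp
    set m : ℝ := ∫ ω, f (cp ω) ∂μ with hmdef
    -- bound on factors
    have hfble : ∀ i ω, f (ci i ω) ≤ Real.exp |lam| := by
      intro i ω
      apply Real.exp_le_exp.2
      calc lam * (ci i ω / (1 + ci i ω)) ≤ |lam * (ci i ω / (1 + ci i ω))| := le_abs_self _
        _ = |lam| * |ci i ω / (1 + ci i ω)| := abs_mul _ _
        _ ≤ |lam| * 1 := by
            apply mul_le_mul_of_nonneg_left _ (abs_nonneg lam)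
            rw [abs_of_nonneg (hY01 i ω).1]; exact (hY01 i ω).2
        _ = |lam| := mul_one _
    have hTmeas : ∀ k : ℕ, AEStronglyMeasurable
        (fun ω => Set.indicator {ω' | L ω' = k} (fun _ => (1:ℝ)) ω
          * ∏ i ∈ Finset.range k, f (ci i ω)) μ := by
      intro k
      exact ((hχm k).mul (Finset.measurable_prod _ fun i _ =>
        hfm.comp (hci i))).aestronglyMeasurable
    have hTb : ∀ (k : ℕ) ω, L ω = k →
        |∏ i ∈ Finset.range k, f (ci i ω)| ≤ (Real.exp |lam|) ^ k := by
      intro k ω _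
      rw [abs_of_nonneg (Finset.prod_nonneg fun i _ => (Real.exp_pos _).le)]
      calc ∏ i ∈ Finset.range k, f (ci i ω)
          ≤ ∏ _i ∈ Finset.range k, Real.exp |lam| :=
            Finset.prod_le_prod (fun i _ => (Real.exp_pos _).le) (fun i _ => hfble i ω)
        _ = Real.exp |lam| ^ k := by rw [Finset.prod_const, Finset.card_range]
    have hfin : ∑' k, μ {ω | L ω = k} * ENNReal.ofReal ((Real.exp |lam|) ^ k) ≠ ⊤ := by
      simp_rw [hLpois]; exact poisson_sum_ne_top hd0 (Real.exp_nonneg _)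
    have hswap := integral_tsum_indicator hL hTmeas hTb hfin
    have hSrep : ∀ ω, Real.exp (lam * S ω)
        = (fun k ω' => ∏ i ∈ Finset.range k, f (ci i ω')) (L ω) ω := by
      intro ω
      show Real.exp (lam * S ω) = ∏ i ∈ Finset.range (L ω), f (ci i ω)
      rw [hSdef]
      simp only []
      rw [Finset.mul_sum, Real.exp_sum]
    have hmgfS : ∫ ω, Real.exp (lam * S ω) ∂μ = Real.exp (d * m - d) := by
      calc ∫ ω, Real.exp (lam * S ω) ∂μ
          = ∫ ω, (fun k ω' => ∏ i ∈ Finset.range k, f (ci i ω')) (L ω) ω ∂μ := by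
            congr 1; funext ω; exact hSrep ω
        _ = ∑' k, ∫ ω, Set.indicator {ω' | L ω' = k} (fun _ => (1:ℝ)) ω
              * ∏ i ∈ Finset.range k, f (ci i ω) ∂μ := hswap
        _ = ∑' k, Real.exp (-d) * d ^ k / (Nat.factorial k : ℝ) * m ^ k := by
            congr 1; funext k
            exact key_integral hd0 hL hLpois hci hcopies hindep f hfm k
        _ = Real.exp (d * m - d) := poisson_pgf m hd0
    have hintS : Integrable (fun ω => Real.exp (lam * S ω)) μ := by
      apply integrable_of_le_pow hL (B := Real.exp |lam|) ?_ ?_ hfin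
      · exact (Real.measurable_exp.comp_aemeasurable
          (aemeasurable_const.mul hSmeas)).aestronglyMeasurable
      · intro ω
        show |Real.exp (lam * S ω)| ≤ Real.exp |lam| ^ L ω
        rw [abs_of_nonneg (Real.exp_pos _).le, ← Real.exp_nat_mul]
        apply Real.exp_le_exp.2
        calc lam * S ω ≤ |lam * S ω| := le_abs_self _
          _ = |lam| * |S ω| := abs_mul _ _
          _ = |lam| * S ω := by rw [abs_of_nonneg (hS0 ω)]
          _ ≤ |lam| * (L ω : ℝ) := mul_le_mul_of_nonneg_left (hSL ω) (abs_nonneg _)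
          _ = (L ω : ℝ) * |lam| := mul_comm _ _
    have hid : IdentDistrib (fun ω => Real.exp (lam * cℓ ω))
        (fun ω => Real.exp (lam * S ω)) μ μ :=
      hlaw.comp ((measurable_id.const_mul lam).exp)
    have hintcl : Integrable (fun ω => Real.exp (lam * cℓ ω)) μ :=
      hid.integrable_iff.mpr hintS
    refine ⟨hintcl, ?_⟩
    have hmgf_eq : mgf cℓ μ lam = Real.exp (d * m - d) := by
      rw [show mgf cℓ μ lam = ∫ ω, Real.exp (lam * cℓ ω) ∂μ from rfl, hid.integral_eq, hmgfS]
    rw [hmgf_eq]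
    apply Real.exp_le_exp.2
    -- d*m - d ≤ d*p*(exp lam - 1)
    have hconv : ∀ y : ℝ, 0 ≤ y → y ≤ 1 →
        Real.exp (lam * y) ≤ 1 + y * (Real.exp lam - 1) := by
      intro y hy0 hy1
      have h := convexOn_exp.2 (Set.mem_univ (0:ℝ)) (Set.mem_univ lam)
        (by linarith : (0:ℝ) ≤ 1 - y) hy0 (by ring)
      simp only [smul_eq_mul, mul_zero, zero_add, Real.exp_zero] at h
      calc Real.exp (lam * y) = Real.exp (y * lam) := by rw [mul_comm]
        _ ≤ (1 - y) * 1 + y * Real.exp lam := h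
        _ = 1 + y * (Real.exp lam - 1) := by ring
    have hfcp_int : Integrable (fun ω => f (cp ω)) μ := by
      apply Integrable.mono' (integrable_const (Real.exp |lam|))
        (hfm.comp hcp).aestronglyMeasurable
      filter_upwards with ω
      show ‖Real.exp (lam * (cp ω / (1 + cp ω)))‖ ≤ Real.exp |lam|
      rw [Real.norm_eq_abs, abs_of_nonneg (Real.exp_pos _).le]
      apply Real.exp_le_exp.2
      calc lam * (cp ω / (1 + cp ω)) ≤ |lam * (cp ω / (1 + cp ω))| := le_abs_self _
        _ = |lam| * |cp ω / (1 + cp ω)| := abs_mul _ _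
        _ ≤ |lam| * 1 := by
            apply mul_le_mul_of_nonneg_left _ (abs_nonneg lam)
            rw [abs_of_nonneg (hcp01 ω).1]; exact (hcp01 ω).2
        _ = |lam| := mul_one _
    have hmle : m ≤ 1 + p * (Real.exp lam - 1) := by
      rw [hmdef]
      calc ∫ ω, f (cp ω) ∂μ
          ≤ ∫ ω, (1 + (cp ω / (1 + cp ω)) * (Real.exp lam - 1)) ∂μ := by
            apply integral_mono hfcp_int
              ((integrable_const (1:ℝ)).add (hgcp_int.mul_const _))
            intro ω
            exact hconv _ (hcp01 ω).1 (hcp01 ω).2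
        _ = 1 + p * (Real.exp lam - 1) := by
            rw [integral_add (integrable_const (1:ℝ)) (hgcp_int.mul_const _),
              integral_const, integral_mul_const]
            simp [hpdef]
    nlinarith [hd0, hmle]
  -- abbreviations for the tail computation
  set ν : ℝ := d * p with hνdef
  have hνd : ν ≤ d := by
    calc ν = d * p := rfl
      _ ≤ d * 1 := mul_le_mul_of_nonneg_left hp1 hd0.le
      _ = d := mul_one d
  have hν0 : 0 ≤ ν := mul_nonneg hd0.le hp0
  set bexp : ℝ := Real.exp (-d * ((1 + t / d) * Real.log (1 + t / d) - t / d)) with hbexpdef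
  have h1td : (0:ℝ) < 1 + t / d := by positivity
  have hbexp_eq : bexp = Real.exp (t - (d + t) * Real.log (1 + t / d)) := by
    rw [hbexpdef]
    congr 1
    field_simp
    ring
  have habs : {ω | t ≤ |cℓ ω - ∫ ω', cℓ ω' ∂μ|}
      ⊆ {ω | ν + t ≤ cℓ ω} ∪ {ω | cℓ ω ≤ ν - t} := by
    intro ω hω
    simp only [Set.mem_setOf_eq, Ecl] at hω
    rcases abs_cases (cℓ ω - ν) with ⟨heq, _⟩ | ⟨heq, _⟩
    · left; simp only [Set.mem_setOf_eq]; rw [heq] at hω; linarith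
    · right; simp only [Set.mem_setOf_eq]; rw [heq] at hω; linarith
  have to_ofReal : ∀ (A : Set Ω) (r : ℝ), 0 ≤ r → (μ A).toReal ≤ r →
      μ A ≤ ENNReal.ofReal r := by
    intro A r hr h
    exact (ENNReal.le_ofReal_iff_toReal_le (measure_ne_top μ A) hr).2 h
  -- upper tail
  have hupper : μ {ω | ν + t ≤ cℓ ω} ≤ ENNReal.ofReal bexp := by
    set lam : ℝ := Real.log (1 + t / d) with hlamdef
    have hlam0 : 0 ≤ lam := Real.log_nonneg (by linarith [div_nonneg ht hd0.le])
    have helam : Real.exp lam = 1 + t / d := Real.exp_log h1td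
    have hcher := measure_ge_le_exp_mul_mgf (X := cℓ) (μ := μ) (ν + t) hlam0 (mgf_bound lam).1
    apply to_ofReal _ _ (Real.exp_pos _).le
    refine hcher.trans ?_
    calc Real.exp (-lam * (ν + t)) * mgf cℓ μ lam
        ≤ Real.exp (-lam * (ν + t)) * Real.exp (d * p * (Real.exp lam - 1)) :=
          mul_le_mul_of_nonneg_left (mgf_bound lam).2 (Real.exp_pos _).le
      _ = Real.exp (d * p * (Real.exp lam - 1) + -lam * (ν + t)) := by
          rw [← Real.exp_add]; ring_nf
      _ ≤ bexp := by
          rw [hbexp_eq]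
          apply Real.exp_le_exp.2
          rw [helam]
          have hlog_le : lam ≤ t / d := by
            rw [hlamdef]
            have := Real.log_le_sub_one_of_pos h1td
            linarith
          have htd : d * (t / d) = t := by field_simp
          have hnn : 0 ≤ (1 - p) * (t - d * lam) := by
            apply mul_nonneg (by linarith)
            have : d * lam ≤ d * (t / d) := mul_le_mul_of_nonneg_left hlog_le hd0.le
            linarith [htd ▸ this]
          nlinarith [hnn, hνdef]
  -- lower tail
  have hlower : μ {ω | cℓ ω ≤ ν - t} ≤ ENNReal.ofReal bexp := by
    rcases lt_trichotomy t ν with hc | hc | hc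
    · -- t < ν
      have htpos' : 0 ≤ t := ht
      have hνpos : 0 < ν := lt_of_le_of_lt ht hc
      have hsub : (0:ℝ) < ν - t := by linarith
      set lam : ℝ := Real.log ((ν - t) / ν) with hlamdef
      have hfrac0 : (0:ℝ) < (ν - t) / ν := by positivity
      have hlam0 : lam ≤ 0 := Real.log_nonpos hfrac0.le (by
        rw [div_le_one hνpos]; linarith)
      have helam : Real.exp lam = (ν - t) / ν := Real.exp_log hfrac0
      have hcher := measure_le_le_exp_mul_mgf (X := cℓ) (μ := μ) (ν - t) hlam0 (mgf_bound lam).1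
      apply to_ofReal _ _ (Real.exp_pos _).le
      refine hcher.trans ?_
      calc Real.exp (-lam * (ν - t)) * mgf cℓ μ lam
          ≤ Real.exp (-lam * (ν - t)) * Real.exp (d * p * (Real.exp lam - 1)) :=
            mul_le_mul_of_nonneg_left (mgf_bound lam).2 (Real.exp_pos _).le
        _ = Real.exp (d * p * (Real.exp lam - 1) + -lam * (ν - t)) := by
            rw [← Real.exp_add, add_comm]
        _ ≤ bexp := by
            rw [hbexp_eq]
            apply Real.exp_le_exp.2
            rw [helam]
            rw [← hνdef]
            have he1 : ν * ((ν - t) / ν - 1) = -t := by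
              rw [mul_sub, mul_one, mul_div_cancel₀ _ hνpos.ne']
              ring
            have hlam_eq : lam = Real.log (ν - t) - Real.log ν := by
              rw [hlamdef, Real.log_div hsub.ne' hνpos.ne']
            -- goal: ν * ((ν-t)/ν - 1) + -lam*(ν-t) ≤ t - (d+t) * log(1+t/d)
            rw [he1, hlam_eq]
            have hdt : (0:ℝ) < d - t := by linarith [lt_of_lt_of_le hc hνd]
            have hmono := mono_ulog htpos (Set.mem_Ioi.2 hsub) (Set.mem_Ioi.2 hdt)
              (by linarith [hνd] : ν - t ≤ d - t)
            simp only [] at hmono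
            rw [show ν - t + t = ν from by ring, show d - t + t = d from by ring] at hmono
            have hpsi := psi_nonneg hd0 ht (lt_of_lt_of_le hc hνd)
            have hlog1td : Real.log (1 + t / d) = Real.log (d + t) - Real.log d := by
              rw [show (1:ℝ) + t / d = (d + t) / d from by field_simp,
                Real.log_div (by linarith) hd0.ne']
            rw [hlog1td]
            nlinarith [hmono, hpsi]
    · -- t = ν
      have hνpos : 0 < ν := by rw [← hc]; exact htpos
      have htd2 : t ≤ d := le_trans (le_of_eq hc) hνd
      have hlog_lt : Real.log (1 + t / d) < t / d := by
        have h1 := Real.log_lt_sub_one_of_pos h1td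
          (ne_of_gt (lt_add_of_pos_right 1 (div_pos htpos hd0)))
        linarith
      have hR : -ν < t - (d + t) * Real.log (1 + t / d) := by
        have h2 : (d + t) * Real.log (1 + t / d) < (d + t) * (t / d) :=
          mul_lt_mul_of_pos_left hlog_lt (by linarith)
        have h3 : (d + t) * (t / d) = t + t * (t / d) := by field_simp
        have h4 : t * (t / d) ≤ t := by
          have h5 : t / d ≤ 1 := (div_le_one hd0).2 htd2
          nlinarith
        rw [h3] at h2
        have h6 : -ν = -t := by rw [hc]
        linarith
      set R : ℝ := t - (d + t) * Real.log (1 + t / d) with hRdef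
      set e : ℝ := min 1 (1 + R / ν) with hedef
      have heRν : -1 < R / ν := by
        rw [show (-1:ℝ) = -ν / ν from by field_simp, div_lt_div_iff_of_pos_right hνpos]
        exact hR
      have he0 : 0 < e := lt_min one_pos (by linarith)
      have he1' : e ≤ 1 := min_le_left _ _
      set lam : ℝ := Real.log e with hlamdef
      have hlam0 : lam ≤ 0 := Real.log_nonpos he0.le he1'
      have helam : Real.exp lam = e := Real.exp_log he0
      have hkey : ν * (e - 1) ≤ R := by
        rcases min_cases (1:ℝ) (1 + R / ν) with ⟨hmin, hle⟩ | ⟨hmin, hlt⟩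
        · rw [hedef, hmin]
          simp only [sub_self, mul_zero]
          have hRν0 : 0 ≤ R / ν := by linarith
          calc (0:ℝ) = ν * 0 := by ring
            _ ≤ ν * (R / ν) := mul_le_mul_of_nonneg_left hRν0 hνpos.le
            _ = R := by field_simp
        · rw [hedef, hmin]
          have : ν * (R / ν) = R := by field_simp
          nlinarith [this]
      have hcher := measure_le_le_exp_mul_mgf (X := cℓ) (μ := μ) (ν - t) hlam0 (mgf_bound lam).1
      apply to_ofReal _ _ (Real.exp_pos _).le
      refine hcher.trans ?_
      have hνt : ν - t = 0 := by rw [hc]; ring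
      calc Real.exp (-lam * (ν - t)) * mgf cℓ μ lam
          ≤ Real.exp (-lam * (ν - t)) * Real.exp (d * p * (Real.exp lam - 1)) :=
            mul_le_mul_of_nonneg_left (mgf_bound lam).2 (Real.exp_pos _).le
        _ = Real.exp (d * p * (Real.exp lam - 1)) := by rw [hνt]; simp
        _ ≤ bexp := by
            rw [hbexp_eq]
            apply Real.exp_le_exp.2
            rw [helam]
            exact hkey
    · -- t > ν
      have hsub : ν - t < 0 := by linarith
      have hnull : μ {ω | cℓ ω ≤ ν - t} = 0 := by
        have hsubset : {ω | cℓ ω ≤ ν - t} ⊆ cℓ ⁻¹' Set.Iio 0 := by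
          intro ω hω
          simp only [Set.mem_preimage, Set.mem_Iio]
          exact lt_of_le_of_lt hω hsub
        refine measure_mono_null hsubset ?_
        rw [hlaw.measure_mem_eq measurableSet_Iio]
        have : S ⁻¹' Set.Iio 0 = ∅ := by
          ext ω
          simp only [Set.mem_preimage, Set.mem_Iio, Set.mem_empty_iff_false, iff_false, not_lt]
          exact hS0 ω
        rw [show (fun ω => ∑ i ∈ Finset.range (L ω), ci i ω / (1 + ci i ω)) ⁻¹' Set.Iio 0
            = S ⁻¹' Set.Iio 0 from rfl, this]
        simp
      rw [hnull]
      exact zero_le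
  -- combine
  calc μ {ω | t ≤ |cℓ ω - ∫ ω', cℓ ω' ∂μ|}
      ≤ μ ({ω | ν + t ≤ cℓ ω} ∪ {ω | cℓ ω ≤ ν - t}) := measure_mono habs
    _ ≤ μ {ω | ν + t ≤ cℓ ω} + μ {ω | cℓ ω ≤ ν - t} := measure_union_le _ _
    _ ≤ ENNReal.ofReal bexp + ENNReal.ofReal bexp := add_le_add hupper hlower
    _ = ENNReal.ofReal (2 * bexp) := by
        rw [← ENNReal.ofReal_add (Real.exp_pos _).le (Real.exp_pos _).le]
        congr 1
        ring
end

section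
/- Let B_c be the weighted non-backtracking matrix of a finite graph H = (V,E) with edge weights c: E → ℝ \ {0}, and let u ∈ ℝ satisfy |u| ≠ |c(i,j)|^{−1} for all edges {i,j}. Then det(I − u·B_c) = det(I + D_{c,u} − A_{c,u}) · Π_{{i,j}∈E} (1 − u²c(i,j)²), where A_{c,u} is the symmetric matrix with entries A_{c,u}(i,j) = u·c(i,j)/(1 − u²c(i,j)²) for {i,j} ∈ E and 0 otherwise, and D_{c,u} is diagonal with D_{c,u}(i,i) = Σ_{k: {i,k}∈E} u²c(i,k)²/(1 − u²c(i,k)²). -/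
open Matrix BigOperators

open Matrix BigOperators Finset
set_option linter.unusedSectionVars false

namespace IharaBassAux

variable {V : Type*} [Fintype V] [DecidableEq V]
variable (G : SimpleGraph V) [DecidableRel G.Adj]

abbrev DE := {p : V × V // G.Adj p.1 p.2}

def rev (e : DE G) : DE G := ⟨(e.val.2, e.val.1), e.prop.symm⟩

variable (w : Sym2 V → ℝ) (u : ℝ)

def ew (e : DE G) : ℝ := w s(e.val.1, e.val.2)

@[simp] lemma rev_rev (e : DE G) : rev G (rev G e) = e := rfl

lemma rev_ne (e : DE G) : rev G e ≠ e := by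
  intro h
  have h1 := congrArg (fun x => x.val.1) h
  simp only [rev] at h1
  exact e.prop.ne h1.symm

@[simp] lemma ew_rev (e : DE G) : ew G w (rev G e) = ew G w e := by
  simp [ew, rev, Sym2.eq_swap]

/-- the matrix `I + u J C` -/
def Pm : Matrix (DE G) (DE G) ℝ := fun e f =>
  (if e = f then 1 else 0) + (if f = rev G e then u * ew G w e else 0)

/-- the inverse of `Pm` -/
noncomputable def Qm : Matrix (DE G) (DE G) ℝ := fun e f =>
  (if f = e then (1 - u ^ 2 * ew G w e ^ 2)⁻¹ else 0) +
    (if f = rev G e then -(u * ew G w e) * (1 - u ^ 2 * ew G w e ^ 2)⁻¹ else 0)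

def Tm : Matrix (DE G) V ℝ := fun e i => if i = e.val.2 then 1 else 0

def Rm : Matrix V (DE G) ℝ := fun i f => if f.val.1 = i then u * ew G w f else 0

lemma P_mul_Q (hne : ∀ e : DE G, 1 - u ^ 2 * ew G w e ^ 2 ≠ 0) :
    Pm G w u * Qm G w u = 1 := by
  ext e f
  rw [Matrix.mul_apply]
  simp only [Pm, add_mul, ite_mul, one_mul, zero_mul]
  rw [Finset.sum_add_distrib]
  rw [Finset.sum_ite_eq Finset.univ e (fun g => Qm G w u g f)]
  rw [Finset.sum_ite_eq' Finset.univ (rev G e) (fun g => u * ew G w e * Qm G w u g f)]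
  simp only [Finset.mem_univ, if_true, Qm, rev_rev, ew_rev, Matrix.one_apply]
  by_cases hfe : f = e
  · subst hfe
    have h1 : ¬ (f = rev G f) := fun h => rev_ne G f h.symm
    simp only [h1, if_true, if_false]
    field_simp [hne f]
    ring
  · by_cases hfr : f = rev G e
    · subst hfr
      have h1 : ¬ (rev G e = e) := rev_ne G e
      simp only [h1, if_true, if_false, if_neg (Ne.symm (fun h => hfe h.symm))]
      have : ¬ (e = rev G e) := fun h => rev_ne G e h.symm
      simp only [this, if_false]
      ring
    · simp [hfe, hfr, Ne.symm hfe]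

lemma TR_apply (e f : DE G) :
    (Tm G * Rm G w u) e f = if f.val.1 = e.val.2 then u * ew G w f else 0 := by
  rw [Matrix.mul_apply]
  simp only [Tm, ite_mul, one_mul, zero_mul]
  rw [Finset.sum_ite_eq' Finset.univ e.val.2 (fun i => Rm G w u i f)]
  simp [Rm]

def Bm : Matrix (DE G) (DE G) ℝ := fun e f =>
  if f.val.1 = e.val.2 ∧ f.val.2 ≠ e.val.1 then w s(f.val.1, f.val.2) else 0

lemma one_sub_smul_B :
    (1 : Matrix (DE G) (DE G) ℝ) - u • Bm G w = Pm G w u - Tm G * Rm G w u := by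
  ext e f
  simp only [Matrix.sub_apply, Matrix.smul_apply, Matrix.one_apply, smul_eq_mul]
  rw [TR_apply]
  simp only [Pm, Bm]
  by_cases h1 : f.val.1 = e.val.2
  · by_cases h2 : f.val.2 = e.val.1
    · have hfr : f = rev G e := Subtype.ext (Prod.ext h1 h2)
      subst hfr
      have hef : ¬ (e = rev G e) := fun h => rev_ne G e h.symm
      simp [rev, hef, ew, Sym2.eq_swap]
    · have hef : ¬ (e = f) := by intro h; rw [h] at h1; exact f.prop.ne h1
      have hfr : ¬ (f = rev G e) := by
        intro h; apply h2; rw [h]; rfl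
      simp only [hef, if_false, h1, h2, ne_eq, not_false_iff, and_true, if_true, hfr, ew]
      ring
  · have hfr : ¬ (f = rev G e) := by
      intro h; apply h1; rw [h]; rfl
    have hB : ¬ ((f.val.1 = e.val.2) ∧ f.val.2 ≠ e.val.1) := fun h => h1 h.1
    simp [hfr, hB, h1]

lemma QT_apply (g : DE G) (j : V) :
    (Qm G w u * Tm G) g j =
      (if j = g.val.2 then (1 - u ^ 2 * ew G w g ^ 2)⁻¹ else 0) +
        (if j = g.val.1 then -(u * ew G w g) * (1 - u ^ 2 * ew G w g ^ 2)⁻¹ else 0) := by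
  rw [Matrix.mul_apply]
  simp only [Qm, add_mul, ite_mul, zero_mul]
  rw [Finset.sum_add_distrib]
  rw [Finset.sum_ite_eq' Finset.univ g (fun f => (1 - u ^ 2 * ew G w g ^ 2)⁻¹ * Tm G f j)]
  rw [Finset.sum_ite_eq' Finset.univ (rev G g)
    (fun f => -(u * ew G w g) * (1 - u ^ 2 * ew G w g ^ 2)⁻¹ * Tm G f j)]
  simp only [Finset.mem_univ, if_true, Tm]
  simp only [mul_ite, mul_one, mul_zero]
  rfl

noncomputable def Am : Matrix V V ℝ := fun i j =>
  if G.Adj i j then u * w s(i, j) / (1 - u ^ 2 * (w s(i, j)) ^ 2) else 0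

noncomputable def Dm : Matrix V V ℝ := Matrix.diagonal fun i =>
  ∑ k ∈ G.neighborFinset i, u ^ 2 * (w s(i, k)) ^ 2 / (1 - u ^ 2 * (w s(i, k)) ^ 2)

lemma RQT : Rm G w u * (Qm G w u * Tm G) = Am G w u - Dm G w u := by
  ext i j
  rw [Matrix.mul_apply]
  have hsummand : ∀ g : DE G, Rm G w u i g * (Qm G w u * Tm G) g j =
      (if g.val.1 = i ∧ j = g.val.2 then u * ew G w g * (1 - u ^ 2 * ew G w g ^ 2)⁻¹ else 0)
      + (if g.val.1 = i ∧ j = g.val.1 then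
          -(u ^ 2 * ew G w g ^ 2 * (1 - u ^ 2 * ew G w g ^ 2)⁻¹) else 0) := by
    intro g
    rw [QT_apply]
    simp only [Rm]
    rw [mul_add]
    congr 1
    · by_cases h1 : g.val.1 = i <;> by_cases h2 : j = g.val.2
      · rw [if_pos h1, if_pos h2, if_pos ⟨h1, h2⟩]
      · rw [if_pos h1, if_neg h2, if_neg (fun h => h2 h.2), mul_zero]
      · rw [if_neg h1, zero_mul, if_neg (fun h => h1 h.1)]
      · rw [if_neg h1, zero_mul, if_neg (fun h => h1 h.1)]
    · by_cases h1 : g.val.1 = i <;> by_cases h3 : j = g.val.1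
      · rw [if_pos h1, if_pos h3, if_pos ⟨h1, h3⟩]; ring
      · rw [if_pos h1, if_neg h3, if_neg (fun h => h3 h.2), mul_zero]
      · rw [if_neg h1, zero_mul, if_neg (fun h => h1 h.1)]
      · rw [if_neg h1, zero_mul, if_neg (fun h => h1 h.1)]
  rw [Finset.sum_congr rfl (fun g _ => hsummand g), Finset.sum_add_distrib]
  have hsum1 : (∑ g : DE G, if g.val.1 = i ∧ j = g.val.2 then
      u * ew G w g * (1 - u ^ 2 * ew G w g ^ 2)⁻¹ else 0) = Am G w u i j := by
    by_cases hadj : G.Adj i j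
    · have heach : ∀ g : DE G, (if g.val.1 = i ∧ j = g.val.2 then
          u * ew G w g * (1 - u ^ 2 * ew G w g ^ 2)⁻¹ else 0) =
          (if g = (⟨(i, j), hadj⟩ : DE G) then
            u * ew G w g * (1 - u ^ 2 * ew G w g ^ 2)⁻¹ else 0) := by
        intro g
        by_cases h : g = (⟨(i, j), hadj⟩ : DE G)
        · subst h; rw [if_pos ⟨rfl, rfl⟩, if_pos rfl]
        · rw [if_neg, if_neg h]
          rintro ⟨ha, hb⟩
          exact h (Subtype.ext (Prod.ext ha hb.symm))
      rw [Finset.sum_congr rfl (fun g _ => heach g),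
        Finset.sum_ite_eq' Finset.univ (⟨(i, j), hadj⟩ : DE G)
          (fun g => u * ew G w g * (1 - u ^ 2 * ew G w g ^ 2)⁻¹)]
      simp [Am, hadj, ew, div_eq_mul_inv]
    · have heach : ∀ g : DE G, (if g.val.1 = i ∧ j = g.val.2 then
          u * ew G w g * (1 - u ^ 2 * ew G w g ^ 2)⁻¹ else 0) = 0 := by
        intro g
        rw [if_neg]
        rintro ⟨ha, hb⟩
        exact hadj (by rw [← ha, hb]; exact g.prop)
      rw [Finset.sum_congr rfl (fun g _ => heach g)]
      simp [Am, hadj]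
  have hsum2 : (∑ g : DE G, if g.val.1 = i ∧ j = g.val.1 then
      -(u ^ 2 * ew G w g ^ 2 * (1 - u ^ 2 * ew G w g ^ 2)⁻¹) else 0) = - Dm G w u i j := by
    by_cases hij : j = i
    · subst hij
      have hmem : ∀ p : V × V,
          p ∈ Finset.univ.filter (fun p : V × V => G.Adj p.1 p.2) ↔ G.Adj p.1 p.2 := by
        intro p; simp
      have hconv : (∑ g : DE G, if g.val.1 = j ∧ j = g.val.1 then
          -(u ^ 2 * ew G w g ^ 2 * (1 - u ^ 2 * ew G w g ^ 2)⁻¹) else 0) =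
          ∑ p ∈ Finset.univ.filter (fun p : V × V => G.Adj p.1 p.2),
            (fun p : V × V => if p.1 = j then -(u ^ 2 * (w s(p.1, p.2)) ^ 2 *
              (1 - u ^ 2 * (w s(p.1, p.2)) ^ 2)⁻¹) else 0) p := by
        rw [Finset.sum_subtype _ hmem]
        apply Finset.sum_congr rfl
        intro g _
        by_cases h : g.val.1 = j
        · rw [if_pos ⟨h, h.symm⟩, if_pos h]; simp only [ew]
        · rw [if_neg (fun hh => h hh.1), if_neg h]
      rw [hconv, Finset.sum_filter, Fintype.sum_prod_type]
      have hinner : ∀ a : V, (∑ b : V, if G.Adj a b then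
          (if a = j then -(u ^ 2 * (w s(a, b)) ^ 2 * (1 - u ^ 2 * (w s(a, b)) ^ 2)⁻¹) else 0)
            else 0) =
          if a = j then (∑ b : V, if G.Adj a b then
            -(u ^ 2 * (w s(a, b)) ^ 2 * (1 - u ^ 2 * (w s(a, b)) ^ 2)⁻¹) else 0) else 0 := by
        intro a
        by_cases ha : a = j
        · subst ha
          simp
        · simp [ha]
      rw [Finset.sum_congr rfl (fun a _ => hinner a),
        Finset.sum_ite_eq' Finset.univ j (fun a => ∑ b : V, if G.Adj a b then
          -(u ^ 2 * (w s(a, b)) ^ 2 * (1 - u ^ 2 * (w s(a, b)) ^ 2)⁻¹) else 0)]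
      simp only [Finset.mem_univ, if_true, Dm, Matrix.diagonal_apply_eq]
      rw [SimpleGraph.neighborFinset_eq_filter, Finset.sum_filter, ← Finset.sum_neg_distrib]
      apply Finset.sum_congr rfl
      intro b _
      by_cases hb : G.Adj j b <;> simp [hb, div_eq_mul_inv]
    · have heach : ∀ g : DE G, (if g.val.1 = i ∧ j = g.val.1 then
          -(u ^ 2 * ew G w g ^ 2 * (1 - u ^ 2 * ew G w g ^ 2)⁻¹) else 0) = 0 := by
        intro g
        rw [if_neg]
        rintro ⟨ha, hb⟩
        exact hij (by rw [hb, ha])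
      rw [Finset.sum_congr rfl (fun g _ => heach g)]
      simp [Dm, Matrix.diagonal_apply_ne _ (fun h => hij h.symm)]
  rw [hsum1, hsum2, Matrix.sub_apply]
  ring

noncomputable def ordv : V → ℕ := fun v => (Fintype.equivFin V v : ℕ)

lemma ordv_inj : Function.Injective (ordv (V := V)) := fun a b h =>
  (Fintype.equivFin V).injective (Fin.val_injective h)

noncomputable def phi (e : DE G) : Fin 2 × ↥G.edgeFinset :=
  ((if ordv e.val.1 < ordv e.val.2 then 0 else 1),
   ⟨s(e.val.1, e.val.2), by
      rw [SimpleGraph.mem_edgeFinset, SimpleGraph.mem_edgeSet]; exact e.prop⟩)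

lemma ord_ne (e : DE G) : ordv e.val.1 ≠ ordv e.val.2 :=
  fun h => e.prop.ne (ordv_inj h)

lemma phi_rev_fst (e : DE G) : (phi G (rev G e)).1 ≠ (phi G e).1 := by
  by_cases h : ordv e.val.1 < ordv e.val.2
  · have h2 : ¬ ordv e.val.2 < ordv e.val.1 := asymm h
    simp [phi, rev, h, h2]
  · have h2 : ordv e.val.2 < ordv e.val.1 :=
      lt_of_le_of_ne (le_of_not_gt h) (Ne.symm (ord_ne G e))
    simp [phi, rev, h, h2]

lemma phi_rev_snd (e : DE G) : (phi G (rev G e)).2 = (phi G e).2 :=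
  Subtype.ext (by simp [phi, rev, Sym2.eq_swap])

lemma phi_snd_val (e : DE G) : ((phi G e).2 : Sym2 V) = s(e.val.1, e.val.2) := rfl

lemma phi_bij : Function.Bijective (phi G) := by
  constructor
  · intro a b h
    have h2 : s(a.val.1, a.val.2) = s(b.val.1, b.val.2) := by
      have := congrArg (fun x => (x.2 : Sym2 V)) h
      simpa [phi] using this
    rw [Sym2.eq_iff] at h2
    rcases h2 with ⟨h3, h4⟩ | ⟨h3, h4⟩
    · exact Subtype.ext (Prod.ext h3 h4)
    · have hb : b = rev G a := Subtype.ext (Prod.ext h4.symm h3.symm)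
      exfalso
      apply phi_rev_fst G a
      rw [← hb]
      exact (congrArg Prod.fst h).symm
  · rintro ⟨b, e, he⟩
    induction e using Sym2.ind with
    | _ x y =>
      have hadj : G.Adj x y := by
        rwa [SimpleGraph.mem_edgeFinset, SimpleGraph.mem_edgeSet] at he
      set g₁ : DE G := ⟨(x, y), hadj⟩ with hg₁
      have hsnd : (phi G g₁).2 = ⟨s(x, y), he⟩ := Subtype.ext rfl
      by_cases hb : (phi G g₁).1 = b
      · exact ⟨g₁, Prod.ext hb hsnd⟩
      · refine ⟨rev G g₁, Prod.ext ?_ ?_⟩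
        · have h1 := phi_rev_fst G g₁
          have : ∀ p q r : Fin 2, p ≠ q → ¬ q = r → p = r := by decide
          exact this _ _ _ h1 hb
        · rw [phi_rev_snd]
          exact hsnd

noncomputable def psi : Fin 2 × ↥G.edgeFinset ≃ DE G :=
  (Equiv.ofBijective (phi G) (phi_bij G)).symm

lemma det_Pm :
    (Pm G w u).det = ∏ e ∈ G.edgeFinset, (1 - u ^ 2 * (w e) ^ 2) := by
  rw [← Matrix.det_submatrix_equiv_self (psi G) (Pm G w u)]
  have hblock : (Pm G w u).submatrix (psi G) (psi G) =
      Matrix.blockDiagonal (fun e : ↥G.edgeFinset =>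
        !![1, u * w (e : Sym2 V); u * w (e : Sym2 V), 1]) := by
    ext ⟨b, e⟩ ⟨b', e'⟩
    rw [Matrix.submatrix_apply, Matrix.blockDiagonal_apply]
    set g : DE G := psi G (b, e) with hgdef
    set h : DE G := psi G (b', e') with hhdef
    have hg : phi G g = (b, e) := by
      rw [hgdef]; exact (Equiv.ofBijective (phi G) (phi_bij G)).apply_symm_apply _
    have hh : phi G h = (b', e') := by
      rw [hhdef]; exact (Equiv.ofBijective (phi G) (phi_bij G)).apply_symm_apply _
    clear_value g h
    have hge : (e : Sym2 V) = s(g.val.1, g.val.2) := by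
      rw [← phi_snd_val, hg]
    have hhe : (e' : Sym2 V) = s(h.val.1, h.val.2) := by
      rw [← phi_snd_val, hh]
    by_cases hee : e = e'
    · rw [if_pos hee]
      have hsym : s(g.val.1, g.val.2) = s(h.val.1, h.val.2) := by
        rw [← hge, ← hhe, hee]
      rw [Sym2.eq_iff] at hsym
      rcases hsym with ⟨h3, h4⟩ | ⟨h3, h4⟩
      · -- h = g
        have hghe : g = h := Subtype.ext (Prod.ext h3 h4)
        subst hghe
        have hbb : b = b' := by
          have := hg.symm.trans hh
          exact congrArg Prod.fst this
        subst hbb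
        have h5 : ¬ (g = rev G g) := fun hx => rev_ne G g hx.symm
        simp only [Pm, if_pos rfl, h5, if_false, add_zero]
        fin_cases b <;> simp
      · -- h = rev g
        have hghe : h = rev G g := Subtype.ext (Prod.ext h4.symm h3.symm)
        have hne1 : ¬ (g = h) := by
          intro hx
          rw [← hx] at hghe
          exact rev_ne G g hghe.symm
        have hbb : b' ≠ b := by
          have h1 : (phi G h).1 = b' := congrArg Prod.fst hh
          have h2 : (phi G g).1 = b := congrArg Prod.fst hg
          rw [← h1, ← h2, hghe]
          exact phi_rev_fst G g
        simp only [Pm, hne1, if_false, hghe, if_pos rfl, zero_add]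
        have hwe : ew G w g = w (e : Sym2 V) := by rw [hge]; rfl
        rw [hwe]
        have hrg : ¬ g = rev G g := fun hx => rev_ne G g hx.symm
        fin_cases b <;> fin_cases b' <;> first | (exact absurd rfl hbb) | simp [hrg]
    · rw [if_neg hee]
      have hne1 : ¬ (g = h) := by
        intro hx
        apply hee
        apply Subtype.ext
        rw [hge, hhe, hx]
      have hne2 : ¬ (h = rev G g) := by
        intro hx
        apply hee
        apply Subtype.ext
        rw [hge, hhe, hx]
        simp [rev, Sym2.eq_swap]
      simp [Pm, hne1, hne2]
  rw [hblock, Matrix.det_blockDiagonal]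
  rw [← Finset.prod_coe_sort G.edgeFinset (fun e => 1 - u ^ 2 * (w e) ^ 2)]
  apply Finset.prod_congr rfl
  intro e _
  rw [Matrix.det_fin_two_of]
  ring

lemma hne_of_hu (hw : ∀ e ∈ G.edgeSet, w e ≠ 0) (hu : ∀ e ∈ G.edgeSet, |u| ≠ |w e|⁻¹) :
    ∀ e : DE G, 1 - u ^ 2 * ew G w e ^ 2 ≠ 0 := by
  intro e h
  have hmem : s(e.val.1, e.val.2) ∈ G.edgeSet := (G.mem_edgeSet).mpr e.prop
  have hc := hw _ hmem
  apply hu _ hmem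
  simp only [ew] at h
  set c := w s(e.val.1, e.val.2) with hcdef
  have habs : |c| ≠ 0 := abs_ne_zero.mpr hc
  have h2 : (|u| * |c|) ^ 2 = 1 := by
    rw [mul_pow, sq_abs, sq_abs]
    nlinarith [h]
  have h3 : (|u| * |c| - 1) * (|u| * |c| + 1) = 0 := by nlinarith [h2]
  have h4 : |u| * |c| = 1 := by
    rcases mul_eq_zero.mp h3 with h5 | h5
    · linarith
    · nlinarith [abs_nonneg u, abs_nonneg c]
  exact eq_inv_of_mul_eq_one_left h4

lemma main (hw : ∀ e ∈ G.edgeSet, w e ≠ 0) (hu : ∀ e ∈ G.edgeSet, |u| ≠ |w e|⁻¹) :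
    Matrix.det ((1 : Matrix (DE G) (DE G) ℝ) - u • Bm G w) =
      Matrix.det (1 + Dm G w u - Am G w u) * ∏ e ∈ G.edgeFinset, (1 - u ^ 2 * (w e) ^ 2) := by
  have hne := hne_of_hu G w u hw hu
  have hPQ := P_mul_Q G w u hne
  rw [one_sub_smul_B]
  have hfact : Pm G w u - Tm G * Rm G w u =
      Pm G w u * (1 - Qm G w u * (Tm G * Rm G w u)) := by
    rw [Matrix.mul_sub, Matrix.mul_one, ← Matrix.mul_assoc, hPQ, Matrix.one_mul]
  rw [hfact, Matrix.det_mul, det_Pm]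
  have hcomm : ((1 : Matrix (DE G) (DE G) ℝ) - Qm G w u * (Tm G * Rm G w u)).det =
      ((1 : Matrix V V ℝ) - Rm G w u * (Qm G w u * Tm G)).det := by
    rw [← Matrix.mul_assoc, Matrix.det_one_sub_mul_comm]
  rw [hcomm, RQT]
  rw [show (1 : Matrix V V ℝ) - (Am G w u - Dm G w u) = 1 + Dm G w u - Am G w u by abel]
  ring

end IharaBassAux

/-- Generalized Ihara–Bass formula for edge-weighted graphs: with `B_c` the weighted
non-backtracking matrix of a finite graph with nonzero edge weights `w`, and `u` with
`|u| ≠ |w(e)|⁻¹` for all edges `e`,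
`det(I − u B_c) = det(I + D_{c,u} − A_{c,u}) · ∏_{e ∈ E} (1 − u² w(e)²)`. -/
theorem generalized_ihara_bass
    {V : Type*} [Fintype V] [DecidableEq V]
    (G : SimpleGraph V) [DecidableRel G.Adj]
    (w : Sym2 V → ℝ)
    (hw : ∀ e ∈ G.edgeSet, w e ≠ 0)
    (u : ℝ) (hu : ∀ e ∈ G.edgeSet, |u| ≠ |w e|⁻¹) :
    let E' := {p : V × V // G.Adj p.1 p.2}
    let B : Matrix E' E' ℝ := fun e f =>
      if f.val.1 = e.val.2 ∧ f.val.2 ≠ e.val.1 then w s(f.val.1, f.val.2) else 0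
    let A : Matrix V V ℝ := fun i j =>
      if G.Adj i j then u * w s(i, j) / (1 - u ^ 2 * (w s(i, j)) ^ 2) else 0
    let D : Matrix V V ℝ := Matrix.diagonal fun i =>
      ∑ k ∈ G.neighborFinset i, u ^ 2 * (w s(i, k)) ^ 2 / (1 - u ^ 2 * (w s(i, k)) ^ 2)
    Matrix.det (1 - u • B) =
      Matrix.det (1 + D - A) * ∏ e ∈ G.edgeFinset, (1 - u ^ 2 * (w e) ^ 2) := by
  exact IharaBassAux.main G w u hw hu
end
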